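/- arXiv:1007.0878 — 9 statements merged into one kernel-verified Lean document; each statement's English description precedes it below -/
import Mathlib

section
/- Let p be a prime and A = Σ_{i=0}^r a_i p^i, B = Σ_{i=0}^r b_i p^i with digits a_i, b_i ∈ {0,...,p-1}, and write A + B = Σ_{i=0}^{r+1} c_i p^i with c_i ∈ {0,...,p-1}. Then c_0 ≡ a_0 + b_0 (mod p), and for 1 ≤ t ≤ r+1: c_t ≡ a_t + b_t + Σ_{i=0}^{t-1} (Σ_{k=1}^{p-1} C(a_i, k) · C(b_i, p-k)) · Π_{j=i+1}^{t-1} C(a_j + b_j, p-1) (mod p). -/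
open Finset

private def carryFn (p : ℕ) (a b : ℕ → ℕ) : ℕ → ℕ
  | 0 => 0
  | i + 1 => if p ≤ a i + b i + carryFn p a b i then 1 else 0

private lemma carryFn_le (p : ℕ) (a b : ℕ → ℕ) : ∀ i, carryFn p a b i ≤ 1
  | 0 => by simp [carryFn]
  | i + 1 => by simp only [carryFn]; split <;> omega

private lemma cast_choose_p (p : ℕ) (hp : p.Prime) {n : ℕ} (h1 : p ≤ n) (h2 : n ≤ 2 * p - 2) :
    ((n.choose p : ℕ) : ZMod p) = 1 := by
  induction n, h1 using Nat.le_induction with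
  | base => simp
  | succ n hn ih =>
    have hp2 := hp.two_le
    have hpeq : p = (p - 1) + 1 := by omega
    rw [hpeq, Nat.choose_succ_succ, ← hpeq]
    have hdvd : (p : ℕ) ∣ n.choose (p - 1) :=
      Nat.Prime.dvd_choose hp (by omega) (by omega) hn
    have h0 : ((n.choose (p - 1) : ℕ) : ZMod p) = 0 := by
      exact_mod_cast (ZMod.natCast_eq_zero_iff _ _).mpr hdvd
    rw [Nat.cast_add, h0, show (p - 1).succ = p from by omega, ih (by omega)]
    ring

private lemma cast_choose_pred (p : ℕ) (hp : p.Prime) {a b : ℕ} (ha : a < p) (hb : b < p) :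
    (((a + b).choose (p - 1) : ℕ) : ZMod p) = if a + b = p - 1 then 1 else 0 := by
  have hp2 := hp.two_le
  rcases lt_trichotomy (a + b) (p - 1) with h | h | h
  · rw [Nat.choose_eq_zero_of_lt h, if_neg (by omega)]; simp
  · rw [h, Nat.choose_self, if_pos rfl]; simp
  · have hdvd : (p : ℕ) ∣ (a + b).choose (p - 1) :=
      Nat.Prime.dvd_choose hp (by omega) (by omega) (by omega)
    rw [if_neg (by omega)]
    exact_mod_cast (ZMod.natCast_eq_zero_iff _ _).mpr hdvd

private lemma vand (p : ℕ) (hp : p.Prime) {a b : ℕ} (ha : a < p) (hb : b < p) :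
    (∑ k ∈ Finset.Icc 1 (p - 1),
      ((Nat.choose a k : ZMod p) * (Nat.choose b (p - k) : ZMod p)))
      = if p ≤ a + b then 1 else 0 := by
  have hp2 := hp.two_le
  have hnat : (∑ k ∈ Finset.Icc 1 (p - 1), a.choose k * b.choose (p - k))
      = (a + b).choose p := by
    rw [Nat.add_choose_eq, Finset.Nat.sum_antidiagonal_eq_sum_range_succ_mk]
    apply Finset.sum_subset
    · intro k hk
      simp only [mem_Icc] at hk
      simp only [mem_range]
      omega
    · intro k hk hk'
      simp only [mem_range] at hk
      simp only [mem_Icc, not_and, not_le] at hk'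
      have : k = 0 ∨ k = p := by omega
      rcases this with rfl | rfl
      · simp [Nat.choose_eq_zero_of_lt hb]
      · simp [Nat.choose_eq_zero_of_lt ha]
  have : (∑ k ∈ Finset.Icc 1 (p - 1),
      ((Nat.choose a k : ZMod p) * (Nat.choose b (p - k) : ZMod p)))
      = (((a + b).choose p : ℕ) : ZMod p) := by
    rw [← hnat]; push_cast; rfl
  rw [this]
  by_cases h : p ≤ a + b
  · rw [if_pos h, cast_choose_p p hp h (by omega)]
  · rw [if_neg h, Nat.choose_eq_zero_of_lt (by omega)]; simp

private lemma digits_unique (p : ℕ) (hp : 2 ≤ p) :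
    ∀ n (f g : ℕ → ℕ), (∀ i < n, f i < p) → (∀ i < n, g i < p) →
      (∑ i ∈ Finset.range n, f i * p ^ i) = (∑ i ∈ Finset.range n, g i * p ^ i) →
      ∀ i < n, f i = g i := by
  intro n
  induction n with
  | zero => intro f g _ _ _ i hi; omega
  | succ n ih =>
    intro f g hf hg heq i hi
    rw [Finset.sum_range_succ' (fun i => f i * p ^ i),
        Finset.sum_range_succ' (fun i => g i * p ^ i)] at heq
    simp only [pow_zero, mul_one, pow_succ] at heq
    have hrw : ∀ (h : ℕ → ℕ), (∑ i ∈ Finset.range n, h (i + 1) * (p ^ i * p))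
        = p * (∑ i ∈ Finset.range n, h (i + 1) * p ^ i) := by
      intro h
      rw [Finset.mul_sum]
      apply Finset.sum_congr rfl
      intros; ring
    rw [hrw f, hrw g] at heq
    have h0 : f 0 = g 0 := by
      have h1 := congrArg (· % p) heq
      simpa [Nat.mul_add_mod, Nat.mod_eq_of_lt (hf 0 (by omega)),
        Nat.mod_eq_of_lt (hg 0 (by omega))] using h1
    have hT : (∑ i ∈ Finset.range n, f (i + 1) * p ^ i)
        = (∑ i ∈ Finset.range n, g (i + 1) * p ^ i) := by
      have : p * (∑ i ∈ Finset.range n, f (i + 1) * p ^ i)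
          = p * (∑ i ∈ Finset.range n, g (i + 1) * p ^ i) := by omega
      exact Nat.eq_of_mul_eq_mul_left (by omega) this
    rcases i with _ | i
    · exact h0
    · exact ih (fun i => f (i + 1)) (fun i => g (i + 1))
        (fun i hi => hf (i + 1) (by omega)) (fun i hi => hg (i + 1) (by omega)) hT i (by omega)

private lemma carry_sum (p : ℕ) (hp : 2 ≤ p) (a b : ℕ → ℕ) :
    ∀ t, (∀ i < t, a i < p) → (∀ i < t, b i < p) →
      (∑ i ∈ Finset.range t, a i * p ^ i) + (∑ i ∈ Finset.range t, b i * p ^ i)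
        = (∑ i ∈ Finset.range t, ((a i + b i + carryFn p a b i) % p) * p ^ i)
          + carryFn p a b t * p ^ t := by
  intro t
  induction t with
  | zero => simp [carryFn]
  | succ t ih =>
    intro ha hb
    rw [Finset.sum_range_succ, Finset.sum_range_succ, Finset.sum_range_succ]
    have hIH := ih (fun i hi => ha i (by omega)) (fun i hi => hb i (by omega))
    set x := a t + b t + carryFn p a b t with hx
    have hxlt : x < 2 * p := by
      have := carryFn_le p a b t
      have := ha t (by omega); have := hb t (by omega); omega
    have hdiv : x / p = carryFn p a b (t + 1) := by
      rw [show carryFn p a b (t + 1) = if p ≤ a t + b t + carryFn p a b t then 1 else 0 from rfl]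
      split
      · exact Nat.div_eq_of_lt_le (by omega) (by omega)
      · exact Nat.div_eq_of_lt (by omega)
    have hmod : x % p + p * carryFn p a b (t + 1) = x := by
      rw [← hdiv]; exact Nat.mod_add_div x p
    calc (∑ i ∈ Finset.range t, a i * p ^ i) + a t * p ^ t
          + ((∑ i ∈ Finset.range t, b i * p ^ i) + b t * p ^ t)
        = ((∑ i ∈ Finset.range t, a i * p ^ i) + (∑ i ∈ Finset.range t, b i * p ^ i))
          + (a t + b t) * p ^ t := by ring
      _ = (∑ i ∈ Finset.range t, ((a i + b i + carryFn p a b i) % p) * p ^ i)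
          + x * p ^ t := by rw [hIH, hx]; ring
      _ = (∑ i ∈ Finset.range t, ((a i + b i + carryFn p a b i) % p) * p ^ i)
          + (x % p) * p ^ t + carryFn p a b (t + 1) * p ^ (t + 1) := by
            rw [pow_succ]
            nth_rewrite 1 [← hmod]
            ring

/-- Addition formula for base-p digits. -/
theorem addition_digit_formula (p : ℕ) (hp : p.Prime) (r : ℕ) (hr : 1 ≤ r)
    (a b c : ℕ → ℕ)
    (ha : ∀ i ≤ r, a i < p) (hb : ∀ i ≤ r, b i < p) (hc : ∀ i ≤ r + 1, c i < p)
    (har : a (r + 1) = 0) (hbr : b (r + 1) = 0)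
    (hsum : (∑ i ∈ Finset.range (r + 1), a i * p ^ i) +
        (∑ i ∈ Finset.range (r + 1), b i * p ^ i) =
        ∑ i ∈ Finset.range (r + 2), c i * p ^ i) :
    (c 0 : ZMod p) = a 0 + b 0 ∧
    ∀ t, 1 ≤ t → t ≤ r + 1 →
      (c t : ZMod p) = a t + b t +
        ∑ i ∈ Finset.range t,
          (∑ k ∈ Finset.Icc 1 (p - 1),
            ((Nat.choose (a i) k : ZMod p) * (Nat.choose (b i) (p - k) : ZMod p))) *
          ∏ j ∈ Finset.Icc (i + 1) (t - 1), (Nat.choose (a j + b j) (p - 1) : ZMod p) := by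
  have hp2 := hp.two_le
  have ha' : ∀ i < r + 2, a i < p := by
    intro i hi
    rcases Nat.lt_or_ge i (r + 1) with h | h
    · exact ha i (by omega)
    · have : i = r + 1 := by omega
      rw [this, har]; omega
  have hb' : ∀ i < r + 2, b i < p := by
    intro i hi
    rcases Nat.lt_or_ge i (r + 1) with h | h
    · exact hb i (by omega)
    · have : i = r + 1 := by omega
      rw [this, hbr]; omega
  -- carry at r+2 is zero
  have hdtop : carryFn p a b (r + 2) = 0 := by
    have h1 := carryFn_le p a b (r + 1)
    rw [show carryFn p a b (r + 2)
        = if p ≤ a (r + 1) + b (r + 1) + carryFn p a b (r + 1) then 1 else 0 from rfl,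
      har, hbr]
    rw [if_neg (by omega)]
  -- extend sums to r+2
  have hsum2 : (∑ i ∈ Finset.range (r + 2), a i * p ^ i) +
      (∑ i ∈ Finset.range (r + 2), b i * p ^ i) =
      ∑ i ∈ Finset.range (r + 2), c i * p ^ i := by
    rw [Finset.sum_range_succ (fun i => a i * p ^ i), Finset.sum_range_succ (fun i => b i * p ^ i),
      har, hbr]
    simpa using hsum
  have hcs := carry_sum p hp2 a b (r + 2) ha' hb'
  rw [hdtop, zero_mul, add_zero, hsum2] at hcs
  have hcval : ∀ i < r + 2, c i = (a i + b i + carryFn p a b i) % p :=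
    digits_unique p hp2 (r + 2) c (fun i => (a i + b i + carryFn p a b i) % p)
      (fun i hi => hc i (by omega)) (fun i _ => Nat.mod_lt _ (by omega)) hcs
  have hccast : ∀ i < r + 2, (c i : ZMod p) = (a i : ZMod p) + b i + carryFn p a b i := by
    intro i hi
    rw [hcval i hi, ZMod.natCast_mod]
    push_cast
    ring
  constructor
  · have := hccast 0 (by omega)
    rw [this, show carryFn p a b 0 = 0 from rfl]
    simp
  · -- key claim: the sum equals the carry
    have claim : ∀ t, t ≤ r →
        (∑ i ∈ Finset.range (t + 1),
          (∑ k ∈ Finset.Icc 1 (p - 1),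
            ((Nat.choose (a i) k : ZMod p) * (Nat.choose (b i) (p - k) : ZMod p))) *
          ∏ j ∈ Finset.Icc (i + 1) t, (Nat.choose (a j + b j) (p - 1) : ZMod p))
        = (carryFn p a b (t + 1) : ZMod p) := by
      intro t
      induction t with
      | zero =>
        intro _
        rw [Finset.sum_range_one]
        rw [show Finset.Icc 1 0 = (∅ : Finset ℕ) from rfl, Finset.prod_empty, mul_one]
        rw [vand p hp (ha 0 (by omega)) (hb 0 (by omega))]
        rw [show carryFn p a b 1 = if p ≤ a 0 + b 0 + 0 then 1 else 0 from rfl]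
        split_ifs with h1 h2 h2 <;> simp_all <;> omega
      | succ t ih =>
        intro ht
        have hIH := ih (by omega)
        rw [Finset.sum_range_succ]
        have hprod : ∀ i ∈ Finset.range (t + 1),
            (∑ k ∈ Finset.Icc 1 (p - 1),
              ((Nat.choose (a i) k : ZMod p) * (Nat.choose (b i) (p - k) : ZMod p))) *
            ∏ j ∈ Finset.Icc (i + 1) (t + 1), (Nat.choose (a j + b j) (p - 1) : ZMod p)
            = ((∑ k ∈ Finset.Icc 1 (p - 1),
              ((Nat.choose (a i) k : ZMod p) * (Nat.choose (b i) (p - k) : ZMod p))) *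
            ∏ j ∈ Finset.Icc (i + 1) t, (Nat.choose (a j + b j) (p - 1) : ZMod p))
              * (Nat.choose (a (t + 1) + b (t + 1)) (p - 1) : ZMod p) := by
          intro i hi
          simp only [Finset.mem_range] at hi
          rw [Finset.prod_Icc_succ_top (by omega)]
          ring
        rw [Finset.sum_congr rfl hprod, ← Finset.sum_mul, hIH]
        rw [show Finset.Icc (t + 1 + 1) (t + 1) = (∅ : Finset ℕ) from
          Finset.Icc_eq_empty (by omega), Finset.prod_empty, mul_one]
        rw [vand p hp (ha (t + 1) (by omega)) (hb (t + 1) (by omega))]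
        rw [cast_choose_pred p hp (ha (t + 1) (by omega)) (hb (t + 1) (by omega))]
        rw [show carryFn p a b (t + 2) = if p ≤ a (t + 1) + b (t + 1) + carryFn p a b (t + 1) then 1 else 0 from rfl]
        have hd1 : carryFn p a b (t + 1) ≤ 1 := carryFn_le p a b (t + 1)
        have hab : a (t + 1) < p := ha (t + 1) (by omega)
        have hbb : b (t + 1) < p := hb (t + 1) (by omega)
        obtain h0 | h1 : carryFn p a b (t + 1) = 0 ∨ carryFn p a b (t + 1) = 1 := by omega
        · rw [h0]
          split_ifs <;> push_cast <;> (first | ring1 | (exfalso; omega))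
        · rw [h1]
          split_ifs <;> push_cast <;> (first | ring1 | (exfalso; omega))
    intro t ht1 ht2
    obtain ⟨s, rfl⟩ : ∃ s, t = s + 1 := ⟨t - 1, by omega⟩
    rw [hccast (s + 1) (by omega)]
    rw [Nat.add_sub_cancel]
    rw [claim s (by omega)]
end

section
/- Let a, b be 2-adic integers with binary expansions a = Σ a_i 2^i, b = Σ b_i 2^i, and write a + b = Σ c_i 2^i with all digits in {0,1}. Then c_0 ≡ a_0 + b_0 (mod 2), and for every t ≥ 1: c_t ≡ a_t + b_t + Σ_{i=0}^{t-1} a_i b_i · Π_{j=i+1}^{t-1} (a_j + b_j) (mod 2). -/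
private lemma twoadic_sble (x : ℕ → ℕ) : Summable (fun i => (x i : ℤ_[2]) * 2 ^ i) := by
  apply Summable.of_norm_bounded (g := fun i => (2⁻¹ : ℝ) ^ i)
    (summable_geometric_of_lt_one (by norm_num) (by norm_num))
  intro i
  have h2 : ‖(2:ℤ_[2]) ^ i‖ = (2⁻¹:ℝ) ^ i := by
    rw [norm_pow, show ((2:ℤ_[2])) = ((2:ℕ):ℤ_[2]) by norm_num, PadicInt.norm_p]
    norm_num
  calc ‖(x i : ℤ_[2]) * 2 ^ i‖ ≤ ‖(x i : ℤ_[2])‖ * ‖(2:ℤ_[2]) ^ i‖ := norm_mul_le _ _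
    _ ≤ 1 * ‖(2:ℤ_[2]) ^ i‖ :=
        mul_le_mul_of_nonneg_right (PadicInt.norm_le_one _) (norm_nonneg _)
    _ = (2⁻¹:ℝ) ^ i := by rw [one_mul, h2]

private lemma twoadic_tail (x : ℕ → ℕ) (N : ℕ) :
    (2 ^ N : ℤ_[2]) ∣ ((∑' i : ℕ, (x i : ℤ_[2]) * 2 ^ i)
      - ∑ i ∈ Finset.range N, (x i : ℤ_[2]) * 2 ^ i) := by
  rw [← Summable.sum_add_tsum_nat_add N (twoadic_sble x), add_sub_cancel_left]
  exact ⟨∑' i : ℕ, (x (i + N) : ℤ_[2]) * 2 ^ i,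
    (tsum_congr fun i => by ring).trans
      ((twoadic_sble fun i => x (i + N)).tsum_mul_left ((2:ℤ_[2])^N))⟩

private lemma twoadic_partial_lt (x : ℕ → ℕ) (hx : ∀ i, x i < 2) (N : ℕ) :
    ∑ i ∈ Finset.range N, x i * 2 ^ i < 2 ^ N := by
  induction N with
  | zero => simp
  | succ n ih =>
    rw [Finset.sum_range_succ]
    have hxn : x n * 2 ^ n ≤ 2 ^ n := by
      have := hx n
      nlinarith [Nat.pow_pos (n := n) (show 0 < 2 by norm_num)]
    have : (2:ℕ) ^ (n+1) = 2 ^ n + 2 ^ n := by ring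
    omega

/-- Addition formula for 2-adic digits. -/
theorem two_adic_addition_digits (a b c : ℕ → ℕ)
    (ha : ∀ i, a i < 2) (hb : ∀ i, b i < 2) (hc : ∀ i, c i < 2)
    (hsum : (∑' i : ℕ, (a i : ℤ_[2]) * 2 ^ i) + (∑' i : ℕ, (b i : ℤ_[2]) * 2 ^ i)
        = ∑' i : ℕ, (c i : ℤ_[2]) * 2 ^ i) :
    (c 0 : ZMod 2) = a 0 + b 0 ∧
    ∀ t, 1 ≤ t →
      (c t : ZMod 2) = a t + b t +
        ∑ i ∈ Finset.range t,
          (a i : ZMod 2) * b i * ∏ j ∈ Finset.Icc (i + 1) (t - 1), ((a j : ZMod 2) + b j) := by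
  -- partial sums as integers
  set A : ℕ → ℤ := fun N => ∑ i ∈ Finset.range N, (a i : ℤ) * 2 ^ i with hA
  set B : ℕ → ℤ := fun N => ∑ i ∈ Finset.range N, (b i : ℤ) * 2 ^ i with hB
  set C : ℕ → ℤ := fun N => ∑ i ∈ Finset.range N, (c i : ℤ) * 2 ^ i with hC
  -- divisibility of partial-sum discrepancy
  have key : ∀ N : ℕ, ((2:ℤ) ^ N) ∣ (A N + B N - C N) := by
    intro N
    have cast_eq : ∀ x : ℕ → ℕ,
        (((∑ i ∈ Finset.range N, (x i : ℤ) * 2 ^ i : ℤ)) : ℤ_[2])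
          = ∑ i ∈ Finset.range N, (x i : ℤ_[2]) * 2 ^ i := by
      intro x; push_cast; ring
    have hdvd : (2 ^ N : ℤ_[2]) ∣ ((A N + B N - C N : ℤ) : ℤ_[2]) := by
      have h3 := ((twoadic_tail a N).add (twoadic_tail b N)).sub (twoadic_tail c N)
      have heq : ((A N + B N - C N : ℤ) : ℤ_[2])
          = -(((∑' i : ℕ, (a i : ℤ_[2]) * 2 ^ i) - ∑ i ∈ Finset.range N, (a i : ℤ_[2]) * 2 ^ i)
            + ((∑' i : ℕ, (b i : ℤ_[2]) * 2 ^ i) - ∑ i ∈ Finset.range N, (b i : ℤ_[2]) * 2 ^ i)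
            - ((∑' i : ℕ, (c i : ℤ_[2]) * 2 ^ i) - ∑ i ∈ Finset.range N, (c i : ℤ_[2]) * 2 ^ i)) := by
        simp only [hA, hB, hC]
        push_cast
        linear_combination hsum
      rw [heq]
      exact h3.neg_right
    have h2 : ((2:ℕ) : ℤ_[2]) ^ N ∣ ((A N + B N - C N : ℤ) : ℤ_[2]) := by
      simpa using hdvd
    have := (PadicInt.pow_p_dvd_int_iff (p := 2) N (A N + B N - C N)).mp h2
    exact_mod_cast this
  -- bounds on partial sums
  have hAlt : ∀ N, A N < 2 ^ N := by
    intro N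
    have := twoadic_partial_lt a ha N
    have : ((∑ i ∈ Finset.range N, a i * 2 ^ i : ℕ) : ℤ) < (2:ℤ) ^ N := by exact_mod_cast this
    simpa [hA] using this.trans_le (le_refl _)
  have hBlt : ∀ N, B N < 2 ^ N := by
    intro N
    have := twoadic_partial_lt b hb N
    have : ((∑ i ∈ Finset.range N, b i * 2 ^ i : ℕ) : ℤ) < (2:ℤ) ^ N := by exact_mod_cast this
    simpa [hB] using this
  have hClt : ∀ N, C N < 2 ^ N := by
    intro N
    have := twoadic_partial_lt c hc N
    have : ((∑ i ∈ Finset.range N, c i * 2 ^ i : ℕ) : ℤ) < (2:ℤ) ^ N := by exact_mod_cast this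
    simpa [hC] using this
  have hAnn : ∀ N, 0 ≤ A N := fun N => Finset.sum_nonneg fun i _ => by positivity
  have hBnn : ∀ N, 0 ≤ B N := fun N => Finset.sum_nonneg fun i _ => by positivity
  have hCnn : ∀ N, 0 ≤ C N := fun N => Finset.sum_nonneg fun i _ => by positivity
  -- carry digits
  set k : ℕ → ℤ := fun t => (A t + B t - C t) / 2 ^ t with hkdef
  have hk : ∀ t, A t + B t - C t = 2 ^ t * k t := fun t =>
    (Int.mul_ediv_cancel' (key t)).symm
  have hk01 : ∀ t, 0 ≤ k t ∧ k t ≤ 1 := by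
    intro t
    have h1 := hk t
    have h2 : (0:ℤ) < 2 ^ t := by positivity
    have hA' := hAlt t; have hB' := hBlt t; have hC' := hClt t
    have hAn := hAnn t; have hBn := hBnn t; have hCn := hCnn t
    constructor
    · nlinarith
    · nlinarith
  have hk0 : k 0 = 0 := by
    have := hk 0
    simp [hA, hB, hC] at this
    omega
  -- the step identity
  have step : ∀ t, (c t : ℤ) + 2 * k (t+1) = a t + b t + k t := by
    intro t
    have h1 := hk t
    have h2 := hk (t+1)
    have hA' : A (t+1) = A t + (a t : ℤ) * 2 ^ t := by rw [hA]; exact Finset.sum_range_succ _ _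
    have hB' : B (t+1) = B t + (b t : ℤ) * 2 ^ t := by rw [hB]; exact Finset.sum_range_succ _ _
    have hC' : C (t+1) = C t + (c t : ℤ) * 2 ^ t := by rw [hC]; exact Finset.sum_range_succ _ _
    have h3 : (2:ℤ) ^ t * ((c t : ℤ) + 2 * k (t+1)) = 2 ^ t * ((a t : ℤ) + b t + k t) := by
      have e : (2:ℤ) ^ (t+1) = 2 ^ t * 2 := by ring
      rw [hA', hB', hC', e] at h2
      nlinarith [h1, h2]
    exact mul_left_cancel₀ (by positivity) h3
  -- digit identity mod 2
  have digit : ∀ t, (c t : ZMod 2) = (a t : ZMod 2) + b t + ((k t : ℤ) : ZMod 2) := by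
    intro t
    have := congrArg (fun z : ℤ => (z : ZMod 2)) (step t)
    push_cast at this
    have h2 : ((2:ZMod 2)) = 0 := by decide
    rw [h2] at this
    simpa using this
  -- carry recursion in ZMod 2
  have crec : ∀ t, ((k (t+1) : ℤ) : ZMod 2)
      = (a t : ZMod 2) * b t + ((a t : ZMod 2) + b t) * ((k t : ℤ) : ZMod 2) := by
    intro t
    have hst := step t
    have hkt := hk01 t
    have hkt1 := hk01 (t+1)
    have ha' : a t = 0 ∨ a t = 1 := by have := ha t; omega
    have hb' : b t = 0 ∨ b t = 1 := by have := hb t; omega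
    have hc' : c t = 0 ∨ c t = 1 := by have := hc t; omega
    obtain ⟨hu1, hu2⟩ := hkt
    obtain ⟨hv1, hv2⟩ := hkt1
    have hk' : k t = 0 ∨ k t = 1 := by omega
    have hk1' : k (t+1) = 0 ∨ k (t+1) = 1 := by omega
    rcases ha' with h1 | h1 <;> rcases hb' with h2 | h2 <;> rcases hc' with h3 | h3 <;>
      rcases hk' with h4 | h4 <;> rcases hk1' with h5 | h5 <;>
      rw [h1, h2, h3, h4] at hst <;>
      rw [h1, h2, h4, h5] <;>
      first
        | (exfalso; push_cast at hst; omega)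
        | (push_cast; decide)
  -- carry closed form
  have cform : ∀ t, ((k t : ℤ) : ZMod 2)
      = ∑ i ∈ Finset.range t,
          (a i : ZMod 2) * b i * ∏ j ∈ Finset.Icc (i + 1) (t - 1), ((a j : ZMod 2) + b j) := by
    intro t
    induction t with
    | zero => simp [hk0]
    | succ n ih =>
      rw [crec n, ih, Finset.sum_range_succ]
      rw [show n + 1 - 1 = n from rfl,
        Finset.Icc_eq_empty (show ¬ n + 1 ≤ n by omega), Finset.prod_empty, mul_one,
        add_comm ((a n : ZMod 2) * b n), Finset.mul_sum]
      congr 1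
      apply Finset.sum_congr rfl
      intro i hi
      have hi' : i < n := Finset.mem_range.mp hi
      have hicc : Finset.Icc (i + 1) n = insert n (Finset.Icc (i + 1) (n - 1)) := by
        ext j
        simp only [Finset.mem_Icc, Finset.mem_insert]
        omega
      have hnmem : n ∉ Finset.Icc (i + 1) (n - 1) := by
        simp only [Finset.mem_Icc]; omega
      rw [hicc, Finset.prod_insert hnmem]
      ring
  refine ⟨?_, ?_⟩
  · rw [digit 0, hk0]; push_cast; ring
  · intro t _
    rw [digit t, cform t]
end

section
/- Let a = Σ_{i=0}^∞ a_i 2^i be a 2-adic integer and n ≥ 1. Write (2^n + 1)·a = Σ_{i=0}^∞ c_i 2^i with digits in {0,1}. Then c_t = a_t for 0 ≤ t ≤ n-1, c_n ≡ a_n + a_0 (mod 2), and for t ≥ n+1: c_t ≡ a_t + a_{t-n} + Σ_{i=n}^{t-1} a_i a_{i-n} · Π_{j=i+1}^{t-1} (a_j + a_{j-n}) (mod 2). -/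
open Finset

namespace TwoAdicAux

/-- Column sum at position `t` when adding `a` and `2^n * a` digitwise. -/
def S (n : ℕ) (a : ℕ → ℕ) (t : ℕ) : ℕ := a t + if n ≤ t then a (t - n) else 0

/-- Carry sequence for the addition `a + 2^n * a`. -/
def E (n : ℕ) (a : ℕ → ℕ) : ℕ → ℕ
  | 0 => 0
  | t + 1 => (S n a t + E n a t) / 2

/-- Digit sequence of `(2^n + 1) * a`. -/
def D (n : ℕ) (a : ℕ → ℕ) (t : ℕ) : ℕ := (S n a t + E n a t) % 2

variable {n : ℕ} {a : ℕ → ℕ}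

lemma E_zero : E n a 0 = 0 := rfl

lemma E_succ (t : ℕ) : E n a (t + 1) = (S n a t + E n a t) / 2 := rfl

lemma S_le (ha : ∀ i, a i < 2) (t : ℕ) : S n a t ≤ 2 := by
  have h1 := ha t
  unfold S
  split
  · have := ha (t - n); omega
  · omega

lemma E_le_one (ha : ∀ i, a i < 2) : ∀ t, E n a t ≤ 1
  | 0 => by rw [E_zero]; omega
  | t + 1 => by
      have h1 := S_le (n := n) ha t
      have h2 := E_le_one ha t
      rw [E_succ]
      omega

lemma E_eq_zero (ha : ∀ i, a i < 2) : ∀ t, t ≤ n → E n a t = 0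
  | 0, _ => rfl
  | t + 1, h => by
      have h2 := E_eq_zero ha t (by omega)
      have h1 := ha t
      rw [E_succ, h2]
      unfold S
      rw [if_neg (by omega)]
      omega

lemma D_lt (t : ℕ) : D n a t < 2 := Nat.mod_lt _ (by norm_num)

lemma digit_sum_lt {b : ℕ → ℕ} (hb : ∀ i, b i < 2) (k : ℕ) :
    ∑ i ∈ range k, b i * 2 ^ i < 2 ^ k := by
  induction k with
  | zero => simp
  | succ k ih =>
      rw [Finset.sum_range_succ]
      have h1 : b k * 2 ^ k ≤ 2 ^ k := by
        calc b k * 2 ^ k ≤ 1 * 2 ^ k := Nat.mul_le_mul_right _ (by have := hb k; omega)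
          _ = 2 ^ k := one_mul _
      have h3 : (2:ℕ) ^ (k+1) = 2 ^ k * 2 := pow_succ 2 k
      omega

lemma sum_S_eq (k : ℕ) :
    ∑ t ∈ range k, S n a t * 2 ^ t
      = (∑ t ∈ range k, D n a t * 2 ^ t) + E n a k * 2 ^ k := by
  induction k with
  | zero => simp [E_zero]
  | succ k ih =>
      rw [Finset.sum_range_succ, Finset.sum_range_succ, ih]
      have hd : S n a k + E n a k = D n a k + 2 * E n a (k + 1) := by
        rw [E_succ]
        unfold D
        omega
      zify at hd ⊢
      linear_combination ((2:ℤ) ^ k) * hd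

lemma key_mod (k : ℕ) :
    ((2 ^ n + 1) * ∑ i ∈ range k, a i * 2 ^ i) % 2 ^ k
      = ∑ t ∈ range k, D n a t * 2 ^ t := by
  have hshift : 2 ^ n * ∑ i ∈ range k, a i * 2 ^ i
      = ∑ t ∈ Ico n (n + k), a (t - n) * 2 ^ t := by
    rw [Finset.sum_Ico_eq_sum_range, Finset.mul_sum]
    simp only [Nat.add_sub_cancel_left]
    exact Finset.sum_congr rfl fun i _ => by ring
  have hsplit : ∑ t ∈ Ico n (n + k), a (t - n) * 2 ^ t
      = (∑ t ∈ Ico n k, a (t - n) * 2 ^ t) + ∑ t ∈ Ico (max n k) (n + k), a (t - n) * 2 ^ t := by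
    rw [show Ico n k = Ico n (max n k) by ext t; simp only [mem_Ico]; omega]
    exact (Finset.sum_Ico_consecutive _ (le_max_left _ _) (by omega)).symm
  have hjunk : (2 : ℕ) ^ k ∣ ∑ t ∈ Ico (max n k) (n + k), a (t - n) * 2 ^ t := by
    refine Finset.dvd_sum fun t ht => ?_
    rw [mem_Ico] at ht
    exact Dvd.dvd.mul_left (pow_dvd_pow 2 (by omega)) _
  have hS : ∑ t ∈ range k, S n a t * 2 ^ t
      = (∑ i ∈ range k, a i * 2 ^ i) + ∑ t ∈ Ico n k, a (t - n) * 2 ^ t := by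
    simp only [S, add_mul, ite_mul, zero_mul, Finset.sum_add_distrib]
    congr 1
    rw [show Ico n k = (range k).filter (fun t => n ≤ t) by
      ext t; simp only [mem_Ico, mem_filter, mem_range]; omega]
    rw [Finset.sum_filter]
  obtain ⟨j, hj⟩ := hjunk
  have h4 := sum_S_eq (n := n) (a := a) k
  have hexp : (2 ^ n + 1) * ∑ i ∈ range k, a i * 2 ^ i
      = (∑ t ∈ range k, D n a t * 2 ^ t) + 2 ^ k * (E n a k + j) := by
    zify at hshift hsplit hS hj h4 ⊢
    linear_combination hshift + hsplit + hj + hS.symm + h4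
  rw [hexp, Nat.add_mul_mod_self_left,
    Nat.mod_eq_of_lt (digit_sum_lt (fun t => D_lt t) k)]

lemma E_zmod (ha : ∀ i, a i < 2) (hn : 1 ≤ n) (t : ℕ) (hnt : n ≤ t) :
    (E n a t : ZMod 2) = ∑ i ∈ Finset.Icc n (t - 1),
      (a i : ZMod 2) * a (i - n) *
        ∏ j ∈ Finset.Icc (i + 1) (t - 1), ((a j : ZMod 2) + a (j - n)) := by
  induction t, hnt using Nat.le_induction with
  | base =>
      rw [E_eq_zero ha n le_rfl, Finset.Icc_eq_empty (by omega), Finset.sum_empty]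
      simp
  | succ t hnt ih =>
      have hcast : ∀ x y e : ℕ, x < 2 → y < 2 → e ≤ 1 →
          (((x + y + e) / 2 : ℕ) : ZMod 2) = (x : ZMod 2) * y + e * (x + y) := by
        intro x y e hx hy he
        interval_cases x <;> interval_cases y <;> interval_cases e <;> decide
      have hE : ((E n a (t + 1) : ℕ) : ZMod 2)
          = (a t : ZMod 2) * a (t - n) + (E n a t : ZMod 2) * ((a t : ZMod 2) + a (t - n)) := by
        rw [E_succ]
        unfold S
        rw [if_pos hnt]
        have := hcast (a t) (a (t - n)) (E n a t) (ha t) (ha (t - n)) (E_le_one ha t)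
        rw [← this]
      rw [hE, ih]
      have ht1 : (t + 1) - 1 = t := by omega
      rw [ht1]
      have hins : Finset.Icc n t = insert t (Finset.Icc n (t - 1)) := by
        ext i; simp only [mem_Icc, mem_insert]; omega
      rw [hins, Finset.sum_insert (by simp only [mem_Icc]; omega)]
      rw [Finset.Icc_eq_empty (show ¬ t + 1 ≤ t by omega), Finset.prod_empty, mul_one]
      have hprod : ∀ i ∈ Finset.Icc n (t - 1),
          (a i : ZMod 2) * a (i - n) * ∏ j ∈ Finset.Icc (i + 1) t, ((a j : ZMod 2) + a (j - n))
          = (((a t : ZMod 2) + a (t - n)) *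
              ((a i : ZMod 2) * a (i - n) *
                ∏ j ∈ Finset.Icc (i + 1) (t - 1), ((a j : ZMod 2) + a (j - n)))) := by
        intro i hi
        rw [mem_Icc] at hi
        have : Finset.Icc (i + 1) t = insert t (Finset.Icc (i + 1) (t - 1)) := by
          ext m; simp only [mem_Icc, mem_insert]; omega
        rw [this, Finset.prod_insert (by simp only [mem_Icc]; omega)]
        ring
      rw [Finset.sum_congr rfl hprod, ← Finset.mul_sum]
      ring

lemma two_adic_summable (b : ℕ → ℕ) :
    Summable (fun i : ℕ => (b i : ℤ_[2]) * 2 ^ i) := by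
  apply NonarchimedeanAddGroup.summable_of_tendsto_cofinite_zero
  rw [Nat.cofinite_eq_atTop, tendsto_zero_iff_norm_tendsto_zero]
  have h2 : (2 : ℤ_[2]) = ((2 : ℕ) : ℤ_[2]) := by norm_num
  apply squeeze_zero (fun i => norm_nonneg _) (g := fun i => (2 : ℝ)⁻¹ ^ i)
  · intro i
    calc ‖(b i : ℤ_[2]) * 2 ^ i‖ ≤ ‖((b i : ℤ_[2]))‖ * ‖(2 : ℤ_[2]) ^ i‖ := norm_mul_le _ _
      _ ≤ 1 * ‖(2 : ℤ_[2]) ^ i‖ := by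
          gcongr; exact PadicInt.norm_le_one _
      _ = (2 : ℝ)⁻¹ ^ i := by
          rw [one_mul, h2, PadicInt.norm_p_pow]
          rw [zpow_neg, zpow_natCast, inv_pow]
          norm_num
  · simpa using tendsto_pow_atTop_nhds_zero_of_lt_one (by norm_num) (by norm_num : (2:ℝ)⁻¹ < 1)

lemma two_adic_truncate (b : ℕ → ℕ) (k : ℕ) :
    ∃ x : ℤ_[2], (∑' i : ℕ, (b i : ℤ_[2]) * 2 ^ i)
      = (∑ i ∈ Finset.range k, (b i : ℤ_[2]) * 2 ^ i) + 2 ^ k * x := by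
  have hs := two_adic_summable b
  have h := Summable.sum_add_tsum_compl (s := Finset.range k) hs
  set T : ℤ_[2] := ∑' i : (((Finset.range k : Finset ℕ) : Set ℕ)ᶜ : Set ℕ),
    (b i : ℤ_[2]) * 2 ^ (i : ℕ) with hT
  have h2 : (2 : ℤ_[2]) = ((2 : ℕ) : ℤ_[2]) := by norm_num
  have hdvd : (2 : ℤ_[2]) ^ k ∣ T := by
    have hnorm : ‖T‖ ≤ ((2 : ℕ) : ℝ) ^ (-(k : ℤ)) := by
      have : Nonempty (((Finset.range k : Finset ℕ) : Set ℕ)ᶜ : Set ℕ) := ⟨⟨k, by simp⟩⟩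
      refine IsUltrametricDist.norm_tsum_le_of_forall_le ?_
      rintro ⟨i, hi⟩
      simp only [Set.mem_compl_iff, Finset.coe_range, Set.mem_Iio, not_lt] at hi
      calc ‖(b i : ℤ_[2]) * 2 ^ i‖ ≤ ‖((b i : ℤ_[2]))‖ * ‖(2 : ℤ_[2]) ^ i‖ := norm_mul_le _ _
        _ ≤ 1 * ‖(2 : ℤ_[2]) ^ i‖ := by gcongr; exact PadicInt.norm_le_one _
        _ = ((2:ℕ) : ℝ) ^ (-(i:ℤ)) := by rw [one_mul, h2, PadicInt.norm_p_pow]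
        _ ≤ ((2:ℕ) : ℝ) ^ (-(k:ℤ)) := by
            apply zpow_le_zpow_right₀ (by norm_num)
            omega
    rw [← Ideal.mem_span_singleton, h2, ← PadicInt.norm_le_pow_iff_mem_span_pow]
    exact hnorm
  obtain ⟨x, hx⟩ := hdvd
  exact ⟨x, by rw [← h, hx]⟩

end TwoAdicAux

open TwoAdicAux in
/-- Digits of `(2^n + 1) * a` for a 2-adic integer `a`. -/
theorem two_adic_mul_two_pow_add_one_digits (n : ℕ) (hn : 1 ≤ n) (a c : ℕ → ℕ)
    (ha : ∀ i, a i < 2) (hc : ∀ i, c i < 2)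
    (hmul : ((2 : ℤ_[2]) ^ n + 1) * (∑' i : ℕ, (a i : ℤ_[2]) * 2 ^ i)
        = ∑' i : ℕ, (c i : ℤ_[2]) * 2 ^ i) :
    (∀ t, t ≤ n - 1 → c t = a t) ∧
    (c n : ZMod 2) = a n + a 0 ∧
    ∀ t, n + 1 ≤ t →
      (c t : ZMod 2) = a t + a (t - n) +
        ∑ i ∈ Finset.Icc n (t - 1),
          (a i : ZMod 2) * a (i - n) *
            ∏ j ∈ Finset.Icc (i + 1) (t - 1), ((a j : ZMod 2) + a (j - n)) := by
  -- Step 1: identify the digits of `c` with the carry-construction digits `D n a`.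
  have hkey : ∀ k, ∑ i ∈ Finset.range k, c i * 2 ^ i
      = ∑ t ∈ Finset.range k, D n a t * 2 ^ t := by
    intro k
    obtain ⟨x, hx⟩ := two_adic_truncate a k
    obtain ⟨y, hy⟩ := two_adic_truncate c k
    set A : ℕ := ∑ i ∈ Finset.range k, a i * 2 ^ i with hA
    set C : ℕ := ∑ i ∈ Finset.range k, c i * 2 ^ i with hC
    have hcastA : ((A : ℕ) : ℤ_[2]) = ∑ i ∈ Finset.range k, (a i : ℤ_[2]) * 2 ^ i := by
      rw [hA]; push_cast; ring
    have hcastC : ((C : ℕ) : ℤ_[2]) = ∑ i ∈ Finset.range k, (c i : ℤ_[2]) * 2 ^ i := by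
      rw [hC]; push_cast; ring
    have hdvd : (2 : ℤ_[2]) ^ k ∣ (((C : ℤ) - (2 ^ n + 1) * (A : ℤ) : ℤ) : ℤ_[2]) := by
      refine ⟨(2 ^ n + 1) * x - y, ?_⟩
      rw [← hcastA] at hx
      rw [← hcastC] at hy
      rw [hx, hy] at hmul
      push_cast
      linear_combination -hmul
    have h2 : (2 : ℤ_[2]) = ((2 : ℕ) : ℤ_[2]) := by norm_num
    rw [h2, PadicInt.pow_p_dvd_int_iff] at hdvd
    have hmod : (2 ^ n + 1) * A ≡ C [MOD 2 ^ k] := by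
      rw [Nat.modEq_iff_dvd]
      push_cast
      push_cast at hdvd
      convert hdvd using 2 <;> try ring
    have hCk : C = ((2 ^ n + 1) * A) % 2 ^ k := by
      have := hmod.symm
      unfold Nat.ModEq at this
      rw [Nat.mod_eq_of_lt (digit_sum_lt hc k)] at this
      exact this
    rw [hCk, hA]
    exact key_mod k
  have hcd : ∀ t, c t = D n a t := by
    intro t
    have h1 := hkey t
    have h2 := hkey (t + 1)
    rw [Finset.sum_range_succ, Finset.sum_range_succ, h1] at h2
    have h3 : c t * 2 ^ t = D n a t * 2 ^ t := by omega
    have h4 : (0:ℕ) < 2 ^ t := pow_pos (by norm_num) t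
    exact Nat.eq_of_mul_eq_mul_right h4 h3
  refine ⟨?_, ?_, ?_⟩
  · intro t ht
    rw [hcd t]
    unfold D S
    rw [if_neg (by omega), E_eq_zero ha t (by omega)]
    have := ha t
    omega
  · rw [hcd n]
    unfold D S
    rw [if_pos le_rfl, E_eq_zero ha n le_rfl, Nat.sub_self, Nat.add_zero,
      ZMod.natCast_mod]
    push_cast
    try ring
  · intro t ht
    rw [hcd t]
    unfold D S
    rw [if_pos (by omega), ZMod.natCast_mod]
    push_cast
    rw [E_zmod ha hn t (by omega)]
    try ring
end

section
/- Let a = Σ_{i=0}^∞ a_i 3^i be a 3-adic integer with digits a_i ∈ {0,1,2}, and write 2a = Σ_{i=0}^∞ c_i 3^i with digits c_i ∈ {0,1,2}. Then c_0 ≡ -a_0 (mod 3) and for t ≥ 1: c_t ≡ -a_t + Σ_{i=0}^{t-1} a_i(1 - a_i) · Π_{j=i+1}^{t-1} a_j(2a_j - 1) (mod 3). -/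
private lemma norm3' : ‖(3 : ℤ_[3])‖ = 3⁻¹ := by
  have h : (((3:ℕ)) : ℤ_[3]) = (3 : ℤ_[3]) := by norm_cast
  rw [← h, PadicInt.norm_p]
  norm_num

private lemma summ3' (d : ℕ → ℕ) : Summable (fun i : ℕ => (d i : ℤ_[3]) * 3 ^ i) := by
  apply Summable.of_norm_bounded (g := fun i => (3⁻¹ : ℝ) ^ i)
    (summable_geometric_of_lt_one (by norm_num) (by norm_num))
  intro i
  calc ‖(d i : ℤ_[3]) * 3 ^ i‖ ≤ ‖(d i : ℤ_[3])‖ * ‖(3 : ℤ_[3]) ^ i‖ := norm_mul_le _ _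
    _ ≤ 1 * (3⁻¹ : ℝ) ^ i := by
        apply mul_le_mul (PadicInt.norm_le_one _) ?_ (norm_nonneg _) zero_le_one
        rw [norm_pow, norm3']
    _ = (3⁻¹ : ℝ) ^ i := one_mul _

private lemma key3' (a c : ℕ → ℕ)
    (hmul : (2 : ℤ_[3]) * (∑' i : ℕ, (a i : ℤ_[3]) * 3 ^ i)
        = ∑' i : ℕ, (c i : ℤ_[3]) * 3 ^ i) (n : ℕ) :
    ((3:ℤ) ^ n) ∣ (2 * ∑ i ∈ Finset.range n, (a i : ℤ) * 3 ^ i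
      - ∑ i ∈ Finset.range n, (c i : ℤ) * 3 ^ i) := by
  set k : ℤ := 2 * ∑ i ∈ Finset.range n, (a i : ℤ) * 3 ^ i
      - ∑ i ∈ Finset.range n, (c i : ℤ) * 3 ^ i with hk
  have hsa := summ3' a
  have hsc := summ3' c
  have hta := Summable.sum_add_tsum_nat_add (f := fun i : ℕ => (a i : ℤ_[3]) * 3 ^ i) n hsa
  have htc := Summable.sum_add_tsum_nat_add (f := fun i : ℕ => (c i : ℤ_[3]) * 3 ^ i) n hsc
  have ha3 : ∑' i : ℕ, (a (i + n) : ℤ_[3]) * 3 ^ (i + n)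
      = 3 ^ n * ∑' i : ℕ, (a (i + n) : ℤ_[3]) * 3 ^ i := by
    rw [← (summ3' (fun i => a (i + n))).tsum_mul_left (3 ^ n)]
    exact tsum_congr fun i => by ring
  have hc3 : ∑' i : ℕ, (c (i + n) : ℤ_[3]) * 3 ^ (i + n)
      = 3 ^ n * ∑' i : ℕ, (c (i + n) : ℤ_[3]) * 3 ^ i := by
    rw [← (summ3' (fun i => c (i + n))).tsum_mul_left (3 ^ n)]
    exact tsum_congr fun i => by ring
  have hkk : (k : ℤ_[3]) = 3 ^ n *
      (∑' i : ℕ, (c (i + n) : ℤ_[3]) * 3 ^ i - 2 * ∑' i : ℕ, (a (i + n) : ℤ_[3]) * 3 ^ i) := by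
    have e1 : (k : ℤ_[3]) = 2 * ∑ i ∈ Finset.range n, (a i : ℤ_[3]) * 3 ^ i
        - ∑ i ∈ Finset.range n, (c i : ℤ_[3]) * 3 ^ i := by push_cast [hk]; ring
    rw [e1]
    have h2 := hmul
    rw [← hta, ← htc] at h2
    rw [ha3, hc3] at h2
    linear_combination h2
  have hnorm : ‖(k : ℤ_[3])‖ ≤ (3:ℝ) ^ (-(n:ℤ)) := by
    rw [hkk]
    calc ‖(3:ℤ_[3]) ^ n * _‖ ≤ ‖(3:ℤ_[3]) ^ n‖ * 1 := by
          apply le_trans (norm_mul_le _ _)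
          exact mul_le_mul_of_nonneg_left (PadicInt.norm_le_one _) (norm_nonneg _)
      _ ≤ (3:ℝ) ^ (-(n:ℤ)) := by
          rw [mul_one, norm_pow, norm3', zpow_neg, ← zpow_natCast, inv_zpow]
  have hdvd := (PadicInt.norm_int_le_pow_iff_dvd (p := 3)).mp (by exact_mod_cast hnorm)
  simpa using hdvd

private lemma carry_step' (E E' A C : ℤ) (hA : 0 ≤ A) (hA3 : A < 3) (hC : 0 ≤ C) (hC3 : C < 3)
    (he : E = 0 ∨ E = 1) (he' : E' = 0 ∨ E' = 1) (hr : 3 * E' = E + 2 * A - C) :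
    (E' : ZMod 3) = (A : ZMod 3) * (1 - (A : ZMod 3))
      + (A : ZMod 3) * (2 * (A : ZMod 3) - 1) * (E : ZMod 3) := by
  interval_cases A <;> rcases he with rfl | rfl <;> rcases he' with rfl | rfl <;>
    first | (exfalso; omega) | (push_cast; decide)

private lemma sum_step' (f g : ℕ → ZMod 3) (t : ℕ) :
    (∑ i ∈ Finset.range (t+1), f i * ∏ j ∈ Finset.Icc (i+1) t, g j)
    = f t + g t * ∑ i ∈ Finset.range t, f i * ∏ j ∈ Finset.Icc (i+1) (t-1), g j := by
  rw [Finset.sum_range_succ, Finset.Icc_eq_empty (by omega), Finset.prod_empty, mul_one,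
    Finset.mul_sum]
  rw [add_comm]
  congr 1
  apply Finset.sum_congr rfl
  intro i hi
  have hi' : i < t := Finset.mem_range.mp hi
  have h1 : Finset.Icc (i+1) t = Finset.Icc (i+1) ((t-1)+1) := by congr 1; omega
  rw [h1, Finset.prod_Icc_succ_top (by omega), show (t-1)+1 = t from by omega]
  ring

/-- Digits of `2 * a` for a 3-adic integer `a`. -/
theorem three_adic_double_digits (a c : ℕ → ℕ)
    (ha : ∀ i, a i < 3) (hc : ∀ i, c i < 3)
    (hmul : (2 : ℤ_[3]) * (∑' i : ℕ, (a i : ℤ_[3]) * 3 ^ i)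
        = ∑' i : ℕ, (c i : ℤ_[3]) * 3 ^ i) :
    (c 0 : ZMod 3) = -(a 0) ∧
    ∀ t, 1 ≤ t →
      (c t : ZMod 3) = -(a t) +
        ∑ i ∈ Finset.range t,
          (a i : ZMod 3) * (1 - (a i : ZMod 3)) *
            ∏ j ∈ Finset.Icc (i + 1) (t - 1), (a j : ZMod 3) * (2 * (a j : ZMod 3) - 1) := by
  set A : ℕ → ℤ := fun n => ∑ i ∈ Finset.range n, (a i : ℤ) * 3 ^ i with hA
  set C : ℕ → ℤ := fun n => ∑ i ∈ Finset.range n, (c i : ℤ) * 3 ^ i with hC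
  set e : ℕ → ℤ := fun n => (2 * A n - C n) / 3 ^ n with hedef
  have he : ∀ n, (3:ℤ) ^ n * e n = 2 * A n - C n := fun n =>
    Int.mul_ediv_cancel' (key3' a c hmul n)
  -- bounds on A, C
  have hbd : ∀ (d : ℕ → ℕ), (∀ i, d i < 3) → ∀ n,
      0 ≤ ∑ i ∈ Finset.range n, (d i : ℤ) * 3 ^ i ∧
      ∑ i ∈ Finset.range n, (d i : ℤ) * 3 ^ i ≤ 3 ^ n - 1 := by
    intro d hd n
    induction n with
    | zero => simp
    | succ n ih =>
      rw [Finset.sum_range_succ]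
      have h1 : (d n : ℤ) ≤ 2 := by exact_mod_cast Nat.lt_succ_iff.mp (hd n)
      have h2 : (0:ℤ) ≤ (d n : ℤ) := Int.natCast_nonneg _
      have h3 : (0:ℤ) < 3 ^ n := by positivity
      rw [pow_succ]
      constructor
      · nlinarith [ih.1]
      · nlinarith [ih.2]
  have hAbd := hbd a ha
  have hCbd := hbd c hc
  -- carries are 0 or 1
  have hb : ∀ n, e n = 0 ∨ e n = 1 := by
    intro n
    have h3 : (0:ℤ) < 3 ^ n := by positivity
    have hlow : (3:ℤ) ^ n * (-1) < 3 ^ n * e n := by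
      rw [he n]; have := (hAbd n).1; have := (hCbd n).2; linarith
    have hhigh : (3:ℤ) ^ n * e n < 3 ^ n * 2 := by
      rw [he n]; have := (hAbd n).2; have := (hCbd n).1; linarith
    have l1 : (-1:ℤ) < e n := lt_of_mul_lt_mul_left hlow (le_of_lt h3)
    have l2 : e n < 2 := lt_of_mul_lt_mul_left hhigh (le_of_lt h3)
    omega
  have he0 : e 0 = 0 := by simp [hedef, hA, hC]
  have hrec : ∀ n, 3 * e (n+1) = e n + 2 * (a n : ℤ) - (c n : ℤ) := by
    intro n
    have hA1 : A (n+1) = A n + (a n : ℤ) * 3 ^ n := Finset.sum_range_succ _ _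
    have hC1 : C (n+1) = C n + (c n : ℤ) * 3 ^ n := Finset.sum_range_succ _ _
    have h1 := he (n+1)
    have h2 := he n
    rw [hA1, hC1, pow_succ] at h1
    have hcan : (3:ℤ) ^ n * (3 * e (n+1)) = 3 ^ n * (e n + 2 * (a n : ℤ) - (c n : ℤ)) := by
      linear_combination h1 - h2
    exact mul_left_cancel₀ (pow_ne_zero n three_ne_zero) hcan
  -- carry formula mod 3
  have hcast : ∀ t, ((e t : ℤ) : ZMod 3) =
      ∑ i ∈ Finset.range t,
        (a i : ZMod 3) * (1 - (a i : ZMod 3)) *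
          ∏ j ∈ Finset.Icc (i + 1) (t - 1), (a j : ZMod 3) * (2 * (a j : ZMod 3) - 1) := by
    intro t
    induction t with
    | zero => simp [he0]
    | succ t ih =>
      have hstep := carry_step' (e t) (e (t+1)) (a t) (c t)
        (Int.natCast_nonneg _) (by exact_mod_cast ha t)
        (Int.natCast_nonneg _) (by exact_mod_cast hc t)
        (hb t) (hb (t+1)) (hrec t)
      have hsum := sum_step' (fun i => (a i : ZMod 3) * (1 - (a i : ZMod 3)))
        (fun j => (a j : ZMod 3) * (2 * (a j : ZMod 3) - 1)) t
      rw [show t + 1 - 1 = t from rfl]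
      rw [hsum, ← ih, hstep]
      push_cast
      ring
  have hct : ∀ t, (c t : ZMod 3) = -(a t : ZMod 3) + ((e t : ℤ) : ZMod 3) := by
    intro t
    have h := hrec t
    have : (c t : ℤ) = e t + 2 * (a t : ℤ) - 3 * e (t+1) := by linarith
    calc (c t : ZMod 3) = ((c t : ℤ) : ZMod 3) := by push_cast; ring
      _ = ((e t + 2 * (a t : ℤ) - 3 * e (t+1) : ℤ) : ZMod 3) := by rw [← this]
      _ = -(a t : ZMod 3) + ((e t : ℤ) : ZMod 3) := by
          push_cast
          have h2 : (2 : ZMod 3) = -1 := by decide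
          have h3 : (3 : ZMod 3) = 0 := by decide
          rw [h2, h3]; ring
  constructor
  · rw [hct 0, he0]; simp
  · intro t ht
    rw [hct t, hcast t]
end

section
/- Let p ≥ 3 be a prime and suppose Σ_{i=0}^∞ a_i p^i = Σ_{i=0}^∞ b_i p^i as p-adic integers, where a_i ∈ {0, ±1, ..., ±(p-1)/2} (numerically least residues) and b_i ∈ {0, 1, ..., p-1}. Then for every t ≥ 0: b_t ≡ a_t + Σ_{λ=0}^{t-1} (Σ_{c=1}^{(p-1)/2} [(a_λ + c)^{p-1} - 1]) · Π_{λ < i < t} (1 - a_i^{p-1}) (mod p). -/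
open Finset

lemma summable_digits (p : ℕ) [Fact (Nat.Prime p)] (c : ℕ → ℤ_[p]) :
    Summable (fun i => c i * (p : ℤ_[p]) ^ i) := by
  have hp1 : (1:ℝ) < p := by exact_mod_cast (Fact.out : Nat.Prime p).one_lt
  apply Summable.of_norm_bounded (g := fun i => ((p:ℝ)⁻¹) ^ i)
  · apply summable_geometric_of_lt_one (by positivity)
    rw [inv_lt_one_iff₀]; right; exact hp1
  · intro i
    calc ‖c i * (p:ℤ_[p]) ^ i‖ ≤ ‖c i‖ * ‖(p:ℤ_[p]) ^ i‖ := norm_mul_le _ _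
    _ ≤ 1 * ‖(p:ℤ_[p]) ^ i‖ := by
        gcongr; exact PadicInt.norm_le_one _
    _ = ((p:ℝ)⁻¹) ^ i := by
        rw [one_mul, PadicInt.norm_p_pow, zpow_neg, ← zpow_natCast, inv_zpow]

lemma dvd_diff (p : ℕ) [Fact (Nat.Prime p)]
    (a : ℕ → ℤ) (b : ℕ → ℕ)
    (heq : (∑' i : ℕ, (a i : ℤ_[p]) * (p : ℤ_[p]) ^ i)
        = ∑' i : ℕ, (b i : ℤ_[p]) * (p : ℤ_[p]) ^ i) (t : ℕ) :
    (p:ℤ)^t ∣ (∑ i ∈ range t, (b i : ℤ) * (p:ℤ)^i) - (∑ i ∈ range t, a i * (p:ℤ)^i) := by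
  have hA := summable_digits p (fun i => (a i : ℤ_[p]))
  have hB := summable_digits p (fun i => ((b i : ℤ) : ℤ_[p]))
  have h1 := Summable.sum_add_tsum_nat_add (f := fun i => (a i : ℤ_[p]) * (p : ℤ_[p]) ^ i) t hA
  have h2 := Summable.sum_add_tsum_nat_add (f := fun i => ((b i : ℤ) : ℤ_[p]) * (p : ℤ_[p]) ^ i) t hB
  have heq' : (∑' i : ℕ, (a i : ℤ_[p]) * (p : ℤ_[p]) ^ i)
      = ∑' i : ℕ, ((b i : ℤ) : ℤ_[p]) * (p : ℤ_[p]) ^ i := by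
    rw [heq]; exact tsum_congr (fun i => by push_cast; ring)
  rw [← h1, ← h2] at heq'
  beta_reduce at heq'
  have e1 : (∑' i : ℕ, (a (i + t) : ℤ_[p]) * (p:ℤ_[p])^(i + t))
      = (p:ℤ_[p])^t * ∑' i : ℕ, (a (i + t) : ℤ_[p]) * (p:ℤ_[p])^i := by
    calc (∑' i : ℕ, (a (i + t) : ℤ_[p]) * (p:ℤ_[p])^(i + t))
        = ∑' i : ℕ, (p:ℤ_[p])^t * ((a (i + t) : ℤ_[p]) * (p:ℤ_[p])^i) :=
          tsum_congr (fun i => by ring)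
      _ = _ := (summable_digits p (fun i => (a (i + t) : ℤ_[p]))).tsum_mul_left _
  have e2 : (∑' i : ℕ, ((b (i + t) : ℤ) : ℤ_[p]) * (p:ℤ_[p])^(i + t))
      = (p:ℤ_[p])^t * ∑' i : ℕ, ((b (i + t) : ℤ) : ℤ_[p]) * (p:ℤ_[p])^i := by
    calc (∑' i : ℕ, ((b (i + t) : ℤ) : ℤ_[p]) * (p:ℤ_[p])^(i + t))
        = ∑' i : ℕ, (p:ℤ_[p])^t * (((b (i + t) : ℤ) : ℤ_[p]) * (p:ℤ_[p])^i) :=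
          tsum_congr (fun i => by ring)
      _ = _ := (summable_digits p (fun i => ((b (i + t) : ℤ) : ℤ_[p]))).tsum_mul_left _
  have cA : (((∑ i ∈ range t, a i * (p:ℤ)^i) : ℤ) : ℤ_[p])
      = ∑ i ∈ range t, (a i : ℤ_[p]) * (p:ℤ_[p])^i := by push_cast; ring
  have cB : (((∑ i ∈ range t, (b i : ℤ) * (p:ℤ)^i) : ℤ) : ℤ_[p])
      = ∑ i ∈ range t, ((b i : ℤ) : ℤ_[p]) * (p:ℤ_[p])^i := by push_cast; ring
  have key : (((∑ i ∈ range t, (b i : ℤ) * (p:ℤ)^i) - (∑ i ∈ range t, a i * (p:ℤ)^i) : ℤ) : ℤ_[p])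
      = (p:ℤ_[p])^t * ((∑' i : ℕ, (a (i + t) : ℤ_[p]) * (p:ℤ_[p])^i)
          - (∑' i : ℕ, ((b (i + t) : ℤ) : ℤ_[p]) * (p:ℤ_[p])^i)) := by
    rw [Int.cast_sub, cA, cB]
    linear_combination e1 - e2 - heq'
  have hnorm : ‖(((∑ i ∈ range t, (b i : ℤ) * (p:ℤ)^i) - (∑ i ∈ range t, a i * (p:ℤ)^i) : ℤ) : ℤ_[p])‖
      ≤ (p:ℝ) ^ (-(t:ℤ)) := by
    rw [key]
    calc ‖(p:ℤ_[p])^t * _‖ ≤ ‖(p:ℤ_[p])^t‖ * 1 := by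
          refine le_trans (norm_mul_le _ _) ?_; gcongr; exact PadicInt.norm_le_one _
    _ = (p:ℝ) ^ (-(t:ℤ)) := by rw [mul_one, PadicInt.norm_p_pow]
  rwa [PadicInt.norm_int_le_pow_iff_dvd] at hnorm

lemma int_cast_ne (p : ℕ) [Fact (Nat.Prime p)] {z : ℤ} (h0 : z ≠ 0) (h : |z| < p) :
    (z : ZMod p) ≠ 0 := by
  rw [Ne, ZMod.intCast_zmod_eq_zero_iff_dvd]
  intro hd
  exact h0 (Int.eq_zero_of_abs_lt_dvd hd h)

lemma absA_bound (p : ℕ) (hp : 2 ≤ p) (a : ℕ → ℤ) (ha : ∀ i, 2*|a i| ≤ (p:ℤ)-1) (t : ℕ) :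
    2 * |∑ i ∈ range t, a i * (p:ℤ)^i| ≤ (p:ℤ)^t - 1 := by
  induction t with
  | zero => simp
  | succ t ih =>
    rw [Finset.sum_range_succ]
    have h1 : (0:ℤ) < (p:ℤ)^t := by positivity
    have h2 := ha t
    have habs := abs_add_le (∑ i ∈ range t, a i * (p:ℤ)^i) (a t * (p:ℤ)^t)
    rw [abs_mul, abs_pow, abs_of_nonneg (by positivity : (0:ℤ) ≤ (p:ℤ))] at habs
    have h3 := mul_le_mul_of_nonneg_right h2 h1.le
    have h4 : (p:ℤ)^(t+1) = (p:ℤ)^t * p := pow_succ _ _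
    nlinarith [abs_nonneg (∑ i ∈ range t, a i * (p:ℤ)^i)]

lemma B_bounds (p : ℕ) (b : ℕ → ℕ) (hb : ∀ i, b i < p) (t : ℕ) :
    0 ≤ ∑ i ∈ range t, (b i : ℤ) * (p:ℤ)^i ∧
      ∑ i ∈ range t, (b i : ℤ) * (p:ℤ)^i ≤ (p:ℤ)^t - 1 := by
  induction t with
  | zero => simp
  | succ t ih =>
    obtain ⟨h0, h1⟩ := ih
    rw [Finset.sum_range_succ]
    have hpt : (0:ℤ) ≤ (p:ℤ)^t := by positivity
    have hb' : (b t : ℤ) ≤ (p:ℤ) - 1 := by have := hb t; omega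
    have hbnn : (0:ℤ) ≤ (b t : ℤ) := Int.natCast_nonneg _
    have h4 : (p:ℤ)^(t+1) = (p:ℤ)^t * p := pow_succ _ _
    constructor
    · exact add_nonneg h0 (mul_nonneg hbnn hpt)
    · nlinarith [mul_le_mul_of_nonneg_right hb' hpt]

lemma S_eval (p : ℕ) [Fact (Nat.Prime p)] (hp3 : 3 ≤ p) (x : ℤ) (hx : 2 * |x| ≤ (p:ℤ) - 1) :
    (∑ c ∈ Finset.Icc 1 ((p - 1) / 2), (((x : ZMod p) + c) ^ (p - 1) - 1))
      = if x < 0 then -1 else 0 := by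
  have hx1 : 2 * x ≤ (p:ℤ) - 1 := by have := le_abs_self x; linarith
  have hx2 : 2 * (-x) ≤ (p:ℤ) - 1 := by have := neg_abs_le x; linarith
  have hp1 : p - 1 ≠ 0 := by omega
  have hcast : ∀ c : ℕ, ((x : ZMod p) + c) = ((x + c : ℤ) : ZMod p) := by
    intro c; push_cast; ring
  rcases lt_or_ge x 0 with hx0 | hx0
  · rw [if_pos hx0]
    set m : ℕ := (-x).toNat with hm
    have hmx : (m : ℤ) = -x := by omega
    have hmem : m ∈ Finset.Icc 1 ((p - 1) / 2) := by
      rw [Finset.mem_Icc]; omega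
    rw [Finset.sum_eq_single_of_mem m hmem]
    · rw [hcast]
      have h0 : (x + (m:ℤ)) = 0 := by omega
      rw [h0, Int.cast_zero, zero_pow hp1, zero_sub]
    · intro c hc hcm
      rw [Finset.mem_Icc] at hc
      obtain ⟨hcl, hcr⟩ := hc
      have hne : (x + (c:ℤ)) ≠ 0 := by
        intro h; apply hcm; omega
      have habs : |x + (c:ℤ)| < p := by rw [abs_lt]; omega
      rw [hcast, ZMod.pow_card_sub_one_eq_one (int_cast_ne p hne habs), sub_self]
  · rw [if_neg (not_lt.mpr hx0)]
    apply Finset.sum_eq_zero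
    intro c hc
    rw [Finset.mem_Icc] at hc
    obtain ⟨hcl, hcr⟩ := hc
    have hne : (x + (c:ℤ)) ≠ 0 := by omega
    have habs : |x + (c:ℤ)| < p := by rw [abs_lt]; omega
    rw [hcast, ZMod.pow_card_sub_one_eq_one (int_cast_ne p hne habs), sub_self]

lemma factor_eval (p : ℕ) [Fact (Nat.Prime p)] (hp3 : 3 ≤ p) (x : ℤ)
    (hx : 2 * |x| ≤ (p:ℤ) - 1) :
    (1 - (x : ZMod p) ^ (p - 1)) = if x = 0 then 1 else 0 := by
  have hp1 : p - 1 ≠ 0 := by omega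
  rcases eq_or_ne x 0 with h | h
  · rw [if_pos h, h, Int.cast_zero, zero_pow hp1, sub_zero]
  · rw [if_neg h]
    have habs : |x| < p := by
      rw [abs_lt]
      have := le_abs_self x
      have := neg_abs_le x
      constructor <;> linarith
    rw [ZMod.pow_card_sub_one_eq_one (int_cast_ne p h habs), sub_self]

/-- Transformation from numerically least residues to least residues: formula for `b_t`. -/
theorem nlr_to_lr (p : ℕ) [Fact (Nat.Prime p)] (hp3 : 3 ≤ p)
    (a : ℕ → ℤ) (b : ℕ → ℕ)
    (ha : ∀ i, |a i| ≤ (p - 1) / 2) (hb : ∀ i, b i < p)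
    (heq : (∑' i : ℕ, (a i : ℤ_[p]) * (p : ℤ_[p]) ^ i)
        = ∑' i : ℕ, (b i : ℤ_[p]) * (p : ℤ_[p]) ^ i) :
    ∀ t, (b t : ZMod p) = (a t : ZMod p) +
      ∑ l ∈ Finset.range t,
        (∑ c ∈ Finset.Icc 1 ((p - 1) / 2), (((a l : ZMod p) + c) ^ (p - 1) - 1)) *
          ∏ i ∈ Finset.Ioo l t, (1 - (a i : ZMod p) ^ (p - 1)) := by
  have hodd : Odd p := (Fact.out : Nat.Prime p).odd_of_ne_two (by omega)
  have ha' : ∀ i, 2 * |a i| ≤ (p:ℤ) - 1 := by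
    intro i
    have := ha i
    omega
  set A : ℕ → ℤ := fun t => ∑ i ∈ range t, a i * (p:ℤ)^i with hAdef
  set B : ℕ → ℤ := fun t => ∑ i ∈ range t, (b i : ℤ) * (p:ℤ)^i with hBdef
  -- B t = A t + ε_t p^t
  have hε : ∀ t, B t = A t + (if A t < 0 then 1 else 0) * (p:ℤ)^t := by
    intro t
    obtain ⟨k, hk⟩ := dvd_diff p a b heq t
    have hk' : B t - A t = (p:ℤ)^t * k := hk
    obtain ⟨hB0', hB1'⟩ := B_bounds p b hb t
    have hB0 : 0 ≤ B t := hB0'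
    have hB1 : B t ≤ (p:ℤ)^t - 1 := hB1'
    have hAb : 2 * |A t| ≤ (p:ℤ)^t - 1 := absA_bound p (by omega) a ha' t
    have hA1 : 2 * A t ≤ (p:ℤ)^t - 1 := by have := le_abs_self (A t); linarith
    have hA2 : -((p:ℤ)^t - 1) ≤ 2 * A t := by have := neg_abs_le (A t); linarith
    have hpt : (0:ℤ) < (p:ℤ)^t := by positivity
    have hkval : k = if A t < 0 then 1 else 0 := by
      rcases lt_or_ge (A t) 0 with h | h
      · rw [if_pos h]
        have hlow : (p:ℤ)^t * 0 < (p:ℤ)^t * k := by rw [← hk']; linarith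
        have hhigh : (p:ℤ)^t * k < (p:ℤ)^t * 2 := by rw [← hk']; linarith
        have k1 : 0 < k := lt_of_mul_lt_mul_left hlow hpt.le
        have k2 : k < 2 := lt_of_mul_lt_mul_left hhigh hpt.le
        omega
      · rw [if_neg (not_lt.mpr h)]
        have hlow : (p:ℤ)^t * (-1) < (p:ℤ)^t * k := by rw [← hk']; linarith
        have hhigh : (p:ℤ)^t * k < (p:ℤ)^t * 1 := by rw [← hk']; linarith
        have k1 : -1 < k := lt_of_mul_lt_mul_left hlow hpt.le
        have k2 : k < 1 := lt_of_mul_lt_mul_left hhigh hpt.le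
        omega
    rw [hkval] at hk'
    linear_combination hk'
  -- digit relation
  have hbt : ∀ t, (b t : ℤ)
      = a t + (if A (t+1) < 0 then 1 else 0) * p - (if A t < 0 then 1 else 0) := by
    intro t
    have h1 := hε t
    have h2 := hε (t+1)
    have eB : B (t+1) - B t = (b t : ℤ) * (p:ℤ)^t := by
      simp [hBdef, Finset.sum_range_succ]
    have eA : A (t+1) - A t = a t * (p:ℤ)^t := by
      simp [hAdef, Finset.sum_range_succ]
    have hpt : ((p:ℤ)^t) ≠ 0 := by positivity
    have key : (b t : ℤ) * (p:ℤ)^t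
        = (a t + (if A (t+1) < 0 then 1 else 0) * p - (if A t < 0 then 1 else 0)) * (p:ℤ)^t := by
      linear_combination h2 - h1 - eB + eA
    exact mul_right_cancel₀ hpt key
  -- main sum identity
  have main : ∀ t, (∑ l ∈ Finset.range t,
        (∑ c ∈ Finset.Icc 1 ((p - 1) / 2), (((a l : ZMod p) + c) ^ (p - 1) - 1)) *
          ∏ i ∈ Finset.Ioo l t, (1 - (a i : ZMod p) ^ (p - 1)))
      = -(if A t < 0 then (1:ZMod p) else 0) := by
    intro t
    induction t with
    | zero => simp [hAdef]
    | succ t ih =>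
      rw [Finset.sum_range_succ]
      have hprod : ∀ l ∈ range t,
          (∑ c ∈ Finset.Icc 1 ((p - 1) / 2), (((a l : ZMod p) + c) ^ (p - 1) - 1)) *
            ∏ i ∈ Finset.Ioo l (t+1), (1 - (a i : ZMod p) ^ (p - 1))
          = ((∑ c ∈ Finset.Icc 1 ((p - 1) / 2), (((a l : ZMod p) + c) ^ (p - 1) - 1)) *
            ∏ i ∈ Finset.Ioo l t, (1 - (a i : ZMod p) ^ (p - 1))) *
              (1 - (a t : ZMod p) ^ (p - 1)) := by
        intro l hl
        rw [Finset.mem_range] at hl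
        have : Finset.Ioo l (t+1) = insert t (Finset.Ioo l t) := by
          ext x
          simp only [Finset.mem_Ioo, Finset.mem_insert]
          omega
        rw [this, Finset.prod_insert (by simp)]
        ring
      rw [Finset.sum_congr rfl hprod, ← Finset.sum_mul, ih]
      have hIoo : Finset.Ioo t (t+1) = ∅ := by
        ext x; simp only [Finset.mem_Ioo, Finset.notMem_empty, iff_false]; omega
      rw [hIoo, Finset.prod_empty, mul_one,
        S_eval p hp3 (a t) (ha' t), factor_eval p hp3 (a t) (ha' t)]
      have hAb : 2 * |A t| ≤ (p:ℤ)^t - 1 := absA_bound p (by omega) a ha' t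
      have hA1 : 2 * A t ≤ (p:ℤ)^t - 1 := by have := le_abs_self (A t); linarith
      have hA2 : -((p:ℤ)^t - 1) ≤ 2 * A t := by have := neg_abs_le (A t); linarith
      have hpt : (0:ℤ) < (p:ℤ)^t := by positivity
      have hrec : A (t+1) = A t + a t * (p:ℤ)^t := by
        simp [hAdef, Finset.sum_range_succ]
      rcases lt_trichotomy (a t) 0 with h | h | h
      · have hneg : A (t+1) < 0 := by
          have h5 : a t * (p:ℤ)^t ≤ (-1) * (p:ℤ)^t :=
            mul_le_mul_of_nonneg_right (by omega) hpt.le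
          rw [hrec]; linarith
        rw [if_pos hneg, if_pos h, if_neg h.ne]
        ring
      · have heq2 : A (t+1) = A t := by rw [hrec, h]; ring
        rw [heq2, if_neg (by omega : ¬ a t < 0), if_pos h]
        ring
      · have hpos : ¬ A (t+1) < 0 := by
          have h5 : (1:ℤ) * (p:ℤ)^t ≤ a t * (p:ℤ)^t :=
            mul_le_mul_of_nonneg_right (by omega) hpt.le
          rw [not_lt, hrec]; linarith
        rw [if_neg hpos, if_neg (by omega : ¬ a t < 0), if_neg (by omega : ¬ a t = 0)]
        ring
  intro t
  have h1 := hbt t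
  have h2 : ((b t : ℤ) : ZMod p) = ((a t + (if A (t+1) < 0 then 1 else 0) * p
      - (if A t < 0 then 1 else 0) : ℤ) : ZMod p) := by rw [h1]
  rw [main t]
  push_cast at h2
  rw [ZMod.natCast_self, mul_zero] at h2
  rw [h2]
  ring
end

section
/- Let p ≥ 3 be a prime and suppose Σ_{i=0}^∞ a_i p^i = Σ_{i=0}^∞ b_i p^i as p-adic integers, where a_i ∈ {0, ±1, ..., ±(p-1)/2} and b_i ∈ {0, 1, ..., p-1}. Then for every t ≥ 0: a_t ≡ b_t + Σ_{λ=0}^{t-1} (Σ_{c=(p+1)/2}^{p-1} [1 - (b_λ - c)^{p-1}]) · Π_{λ < i < t} [1 - (b_i - (p-1)/2)^{p-1}] (mod p). -/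
open Finset

lemma aux_summable (p : ℕ) [Fact p.Prime] (x : ℕ → ℤ_[p]) :
    Summable fun i => x i * (p : ℤ_[p]) ^ i := by
  have hp1 : (1:ℝ) < p := by exact_mod_cast (Fact.out : p.Prime).one_lt
  apply Summable.of_norm_bounded (g := fun i => ((p:ℝ)⁻¹) ^ i)
  · exact summable_geometric_of_lt_one (by positivity) (inv_lt_one_of_one_lt₀ hp1)
  · intro i
    calc ‖x i * (p:ℤ_[p])^i‖ ≤ ‖x i‖ * ‖(p:ℤ_[p])^i‖ := norm_mul_le _ _
      _ ≤ 1 * ‖(p:ℤ_[p])^i‖ := by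
          gcongr; exact PadicInt.norm_le_one _
      _ = ((p:ℝ)⁻¹) ^ i := by
          rw [one_mul, PadicInt.norm_p_pow, zpow_neg, zpow_natCast]
          exact (inv_pow _ _).symm

lemma aux_dvd (p : ℕ) [Fact p.Prime] (a : ℕ → ℤ) (b : ℕ → ℕ)
    (heq : (∑' i : ℕ, (a i : ℤ_[p]) * (p : ℤ_[p]) ^ i)
        = ∑' i : ℕ, (b i : ℤ_[p]) * (p : ℤ_[p]) ^ i) (n : ℕ) :
    ((p:ℤ) ^ n) ∣ (∑ i ∈ range n, (b i : ℤ) * (p:ℤ)^i) - (∑ i ∈ range n, a i * (p:ℤ)^i) := by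
  rw [← PadicInt.norm_int_le_pow_iff_dvd]
  have sa := aux_summable p (fun i => (a i : ℤ_[p]))
  have sb := aux_summable p (fun i => ((b i : ℤ) : ℤ_[p]))
  have ha2 := Summable.sum_add_tsum_nat_add n sa
  have hb2 := Summable.sum_add_tsum_nat_add n sb
  have sta := aux_summable p (fun i => (a (i + n) : ℤ_[p]))
  have stb := aux_summable p (fun i => ((b (i + n) : ℤ) : ℤ_[p]))
  have ta : (∑' i, (a (i + n) : ℤ_[p]) * (p:ℤ_[p])^(i+n))
      = (∑' i, (a (i + n) : ℤ_[p]) * (p:ℤ_[p])^i) * (p:ℤ_[p])^n := by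
    rw [← sta.tsum_mul_right]
    congr 1; funext i; rw [pow_add, mul_assoc]
  have tb : (∑' i, ((b (i + n) : ℤ) : ℤ_[p]) * (p:ℤ_[p])^(i+n))
      = (∑' i, ((b (i + n) : ℤ) : ℤ_[p]) * (p:ℤ_[p])^i) * (p:ℤ_[p])^n := by
    rw [← stb.tsum_mul_right]
    congr 1; funext i; rw [pow_add, mul_assoc]
  rw [ta] at ha2
  rw [tb] at hb2
  set TA := (∑' i, (a (i + n) : ℤ_[p]) * (p:ℤ_[p])^i)
  set TB := (∑' i, ((b (i + n) : ℤ) : ℤ_[p]) * (p:ℤ_[p])^i)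
  have key : (((∑ i ∈ range n, (b i : ℤ) * (p:ℤ)^i) - (∑ i ∈ range n, a i * (p:ℤ)^i) : ℤ) : ℤ_[p])
      = (TA - TB) * (p:ℤ_[p])^n := by
    have hcast : ∀ (f : ℕ → ℤ), ((∑ i ∈ range n, f i * (p:ℤ)^i : ℤ) : ℤ_[p])
        = ∑ i ∈ range n, (f i : ℤ_[p]) * (p:ℤ_[p])^i := by
      intro f; push_cast; ring_nf; exact Finset.sum_congr rfl fun x _ => mul_comm _ _
    rw [Int.cast_sub, hcast (fun i => (b i : ℤ)), hcast a]
    have : (∑ i ∈ range n, (a i : ℤ_[p]) * (p:ℤ_[p])^i) + TA * (p:ℤ_[p])^n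
        = (∑ i ∈ range n, ((b i : ℤ) : ℤ_[p]) * (p:ℤ_[p])^i) + TB * (p:ℤ_[p])^n := by
      rw [ha2, hb2]
      simpa using heq
    linear_combination -this
  rw [key]
  calc ‖(TA - TB) * (p:ℤ_[p])^n‖ ≤ ‖TA - TB‖ * ‖(p:ℤ_[p])^n‖ := norm_mul_le _ _
    _ ≤ 1 * ‖(p:ℤ_[p])^n‖ := by gcongr; exact PadicInt.norm_le_one _
    _ = (p:ℝ) ^ (-(n:ℤ)) := by rw [one_mul, PadicInt.norm_p_pow]

/-- Transformation from least residues to numerically least residues: formula for `a_t`. -/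
theorem lr_to_nlr (p : ℕ) [Fact (Nat.Prime p)] (hp3 : 3 ≤ p)
    (a : ℕ → ℤ) (b : ℕ → ℕ)
    (ha : ∀ i, |a i| ≤ (p - 1) / 2) (hb : ∀ i, b i < p)
    (heq : (∑' i : ℕ, (a i : ℤ_[p]) * (p : ℤ_[p]) ^ i)
        = ∑' i : ℕ, (b i : ℤ_[p]) * (p : ℤ_[p]) ^ i) :
    ∀ t, (a t : ZMod p) = (b t : ZMod p) +
      ∑ l ∈ Finset.range t,
        (∑ c ∈ Finset.Icc ((p + 1) / 2) (p - 1), (1 - ((b l : ZMod p) - c) ^ (p - 1))) *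
          ∏ i ∈ Finset.Ioo l t,
            (1 - ((b i : ZMod p) - ((p - 1) / 2 : ℕ)) ^ (p - 1)) := by
  have hprime : p.Prime := Fact.out
  have hodd : p % 2 = 1 := Nat.odd_iff.mp (hprime.odd_of_ne_two (by omega))
  set m := (p - 1) / 2 with hm
  have hpm : p = 2 * m + 1 := by omega
  have hpm' : (p : ℤ) = 2 * (m : ℤ) + 1 := by exact_mod_cast congrArg (Nat.cast : ℕ → ℤ) hpm
  have hm' : ((p : ℤ) - 1) / 2 = (m : ℤ) := by omega
  set A : ℕ → ℤ := fun n => ∑ i ∈ range n, a i * (p:ℤ)^i with hAdef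
  set B : ℕ → ℤ := fun n => ∑ i ∈ range n, (b i : ℤ) * (p:ℤ)^i with hBdef
  have hd : ∀ n, ((p:ℤ)^n) ∣ B n - A n := fun n => aux_dvd p a b heq n
  set ca : ℕ → ℤ := fun n => (B n - A n) / (p:ℤ)^n with hcadef
  have hppos : (0:ℤ) < (p:ℤ) := by positivity
  have hceq : ∀ n, B n - A n = ca n * (p:ℤ)^n := fun n => (Int.ediv_mul_cancel (hd n)).symm
  have hqpos : ∀ n, (0:ℤ) < (p:ℤ)^n := fun n => pow_pos hppos n
  have hgeo : ∀ n, (∑ i ∈ range n, (p:ℤ)^i) * ((p:ℤ) - 1) = (p:ℤ)^n - 1 :=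
    fun n => geom_sum_mul _ _
  have hAbd : ∀ n, 2 * |A n| ≤ (p:ℤ)^n - 1 := by
    intro n
    have h1 : |A n| ≤ (m:ℤ) * ∑ i ∈ range n, (p:ℤ)^i := by
      rw [Finset.mul_sum]
      refine (Finset.abs_sum_le_sum_abs _ _).trans ?_
      apply Finset.sum_le_sum; intro i _
      rw [abs_mul, abs_pow, abs_of_nonneg hppos.le]
      exact mul_le_mul_of_nonneg_right ((ha i).trans_eq hm') (by positivity)
    have h2 : 2 * ((m:ℤ) * ∑ i ∈ range n, (p:ℤ)^i) = (p:ℤ)^n - 1 := by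
      linear_combination hgeo n - (∑ i ∈ range n, (p:ℤ)^i) * hpm'
    linarith
  have hBbd : ∀ n, 0 ≤ B n ∧ B n ≤ (p:ℤ)^n - 1 := by
    intro n
    constructor
    · apply Finset.sum_nonneg; intro i _; positivity
    · calc B n ≤ ∑ i ∈ range n, ((p:ℤ) - 1) * (p:ℤ)^i := by
            apply Finset.sum_le_sum; intro i _
            apply mul_le_mul_of_nonneg_right _ (by positivity)
            have : (b i : ℤ) < p := by exact_mod_cast hb i
            omega
        _ = (p:ℤ)^n - 1 := by rw [← hgeo n, Finset.sum_mul]; apply Finset.sum_congr rfl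
                              intros; ring
  have hc01 : ∀ n, ca n = 0 ∨ ca n = 1 := by
    intro n
    have h1 := hAbd n
    have h2 := hBbd n
    have h3 := hceq n
    have h4 := hqpos n
    have h5 := neg_abs_le (A n)
    have h6 := le_abs_self (A n)
    have l1 : (-2 : ℤ) * (p:ℤ)^n < (2 * ca n) * (p:ℤ)^n := by nlinarith
    have l2 : (2 * ca n) * (p:ℤ)^n < (4:ℤ) * (p:ℤ)^n := by nlinarith
    have r1 := lt_of_mul_lt_mul_right l1 h4.le
    have r2 := lt_of_mul_lt_mul_right l2 h4.le
    omega
  have hdig : ∀ n, ca (n+1) * (p:ℤ) = ca n + (b n : ℤ) - a n := by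
    intro n
    have h1 := hceq n
    have h2 := hceq (n+1)
    have hBs : B (n+1) = B n + (b n : ℤ) * (p:ℤ)^n := Finset.sum_range_succ _ _
    have hAs : A (n+1) = A n + a n * (p:ℤ)^n := Finset.sum_range_succ _ _
    rw [hBs, hAs, pow_succ] at h2
    have key : (ca (n+1) * (p:ℤ)) * (p:ℤ)^n = (ca n + (b n:ℤ) - a n) * (p:ℤ)^n := by
      linear_combination h1 - h2
    exact mul_right_cancel₀ (hqpos n).ne' key
  have hstep : ∀ n, (((m:ℤ)+1 ≤ (b n:ℤ) → ca (n+1) = 1) ∧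
      ((b n:ℤ) = (m:ℤ) → ca (n+1) = ca n) ∧ ((b n:ℤ) < (m:ℤ) → ca (n+1) = 0)) := by
    intro n
    have key := hdig n
    have h1 := hc01 n
    have h2 := hc01 (n+1)
    have h3 := abs_le.mp ((ha n).trans_eq hm')
    have h4 : (b n : ℤ) < (p:ℤ) := by exact_mod_cast hb n
    have h5 : (0:ℤ) ≤ (b n : ℤ) := Int.natCast_nonneg _
    rcases h1 with h1|h1 <;> rcases h2 with h2|h2 <;> rw [h2] at key <;>
      refine ⟨fun h => ?_, fun h => ?_, fun h => ?_⟩ <;> omega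
  -- ZMod p indicators
  have hp1 : p - 1 ≠ 0 := by omega
  have hind : ∀ x y : ℕ, x < p → y < p →
      (1 - ((x:ZMod p) - (y:ZMod p))^(p-1) : ZMod p) = if x = y then 1 else 0 := by
    intro x y hx hy
    by_cases hxy : x = y
    · simp [hxy, sub_self, zero_pow hp1]
    · have hne : ((x:ZMod p) - (y:ZMod p)) ≠ 0 := by
        intro h
        apply hxy
        have h' : (x : ZMod p) = (y : ZMod p) := sub_eq_zero.mp h
        have hv : (x : ZMod p).val = (y : ZMod p).val := by rw [h']
        rwa [ZMod.val_cast_of_lt hx, ZMod.val_cast_of_lt hy] at hv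
      rw [ZMod.pow_card_sub_one_eq_one hne]
      simp [hxy]
  have hG : ∀ l, (∑ x ∈ Icc (m+1) (p-1), (1 - ((b l : ZMod p) - (x:ZMod p))^(p-1)))
      = if m+1 ≤ b l then (1:ZMod p) else 0 := by
    intro l
    rw [Finset.sum_congr rfl (fun x hx => hind (b l) x (hb l)
      (by simp only [mem_Icc] at hx; omega))]
    rw [Finset.sum_ite_eq]
    exact if_congr (by simp only [mem_Icc]; have := hb l; omega) rfl rfl
  have hP : ∀ i, (1 - ((b i : ZMod p) - (m:ZMod p))^(p-1) : ZMod p)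
      = if b i = m then 1 else 0 := fun i => hind (b i) m (hb i) (by omega)
  have hca0 : ca 0 = 0 := by simp [hcadef, hAdef, hBdef]
  have main : ∀ t, (∑ l ∈ range t, (if m+1 ≤ b l then (1:ZMod p) else 0) *
      ∏ i ∈ Ioo l t, (if b i = m then (1:ZMod p) else 0)) = ((ca t : ℤ) : ZMod p) := by
    intro t
    induction t with
    | zero => simp [hca0]
    | succ t ih =>
      rw [Finset.sum_range_succ]
      have hIooEmpty : Ioo t (t+1) = (∅ : Finset ℕ) := by
        ext x; simp only [mem_Ioo, notMem_empty, iff_false]; omega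
      rw [hIooEmpty, Finset.prod_empty, mul_one]
      have hIoo : ∀ l ∈ range t, (if m+1 ≤ b l then (1:ZMod p) else 0) *
          (∏ i ∈ Ioo l (t+1), (if b i = m then (1:ZMod p) else 0)) =
          (if b t = m then (1:ZMod p) else 0) *
          ((if m+1 ≤ b l then (1:ZMod p) else 0) *
            ∏ i ∈ Ioo l t, (if b i = m then (1:ZMod p) else 0)) := by
        intro l hl
        have hlt : l < t := mem_range.mp hl
        have hins : Ioo l (t+1) = insert t (Ioo l t) := by
          ext x; simp only [mem_Ioo, mem_insert]; omega
        rw [hins, Finset.prod_insert (by simp)]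
        ring
      rw [Finset.sum_congr rfl hIoo, ← Finset.mul_sum, ih]
      obtain ⟨hgen, hprop, hzero⟩ := hstep t
      rcases lt_trichotomy (b t) m with h|h|h
      · rw [if_neg (by omega), if_neg (by omega), hzero (by exact_mod_cast h)]
        simp
      · rw [if_pos h, if_neg (by omega), hprop (by exact_mod_cast h)]
        simp
      · rw [if_neg (by omega), if_pos (by omega), hgen (by exact_mod_cast Nat.succ_le_of_lt h)]
        simp
  intro t
  have hfin : (a t : ZMod p) = (b t : ZMod p) + ((ca t : ℤ) : ZMod p) := by
    have hat : (a t : ℤ) = (b t : ℤ) + ca t - ca (t+1) * (p:ℤ) := by linarith [hdig t]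
    calc (a t : ZMod p) = (((b t : ℤ) + ca t - ca (t+1) * (p:ℤ) : ℤ) : ZMod p) := by
          rw [← hat]
      _ = (b t : ZMod p) + ((ca t : ℤ) : ZMod p) := by
          push_cast
          rw [ZMod.natCast_self]
          ring
  have hhalf : (p + 1) / 2 = m + 1 := by omega
  rw [hfin, hhalf]
  congr 1
  rw [← main t]
  apply Finset.sum_congr rfl
  intro l _
  rw [hG l]
  congr 1
  apply Finset.prod_congr rfl
  intro i _
  exact (hP i).symm
end

section
/- Suppose Σ_{i=0}^∞ a_i 3^i = Σ_{i=0}^∞ b_i 3^i as 3-adic integers, with a_i ∈ {0, ±1} and b_i ∈ {0,1,2}. Then for every t: a_t ≡ b_t + Σ_{0 ≤ λ < t} b_λ(1 - b_λ) · Π_{λ < i < t} b_i(2 - b_i) (mod 3). -/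
theorem carry_step (bn : ℕ) (cn cn1 an : ℤ) (hbn : bn < 3) (han : |an| ≤ 1)
    (h0 : cn = 0 ∨ cn = 1) (h1 : cn1 = 0 ∨ cn1 = 1)
    (hr : an = (bn : ℤ) + cn - 3 * cn1) :
    (cn1 : ZMod 3) = (bn : ZMod 3) * (1 - (bn : ZMod 3)) +
      ((bn : ZMod 3) * (2 - (bn : ZMod 3))) * (cn : ZMod 3) := by
  have habs := abs_le.mp han
  interval_cases bn <;> rcases h0 with rfl | rfl <;> rcases h1 with rfl | rfl <;>
    first
      | (exfalso; push_cast at hr; omega)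
      | decide

set_option maxHeartbeats 1000000 in
/-- Standard to balanced ternary digit transformation. -/
theorem standard_to_balanced_ternary (a : ℕ → ℤ) (b : ℕ → ℕ)
    (ha : ∀ i, |a i| ≤ 1) (hb : ∀ i, b i < 3)
    (heq : (∑' i : ℕ, (a i : ℤ_[3]) * 3 ^ i) = ∑' i : ℕ, (b i : ℤ_[3]) * 3 ^ i) :
    ∀ t, (a t : ZMod 3) = (b t : ZMod 3) +
      ∑ l ∈ Finset.range t,
        (b l : ZMod 3) * (1 - (b l : ZMod 3)) *
          ∏ i ∈ Finset.Ioo l t, (b i : ZMod 3) * (2 - (b i : ZMod 3)) := by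
  -- summability helper
  have hsumg : ∀ c : ℕ → ℤ, Summable (fun i => (c i : ℤ_[3]) * 3 ^ i) := by
    intro c
    apply Summable.of_norm_bounded (g := fun i => (3:ℝ)⁻¹ ^ i)
      (summable_geometric_of_lt_one (by norm_num) (by norm_num))
    intro i
    rw [norm_mul, norm_pow]
    have h3 : ‖(3 : ℤ_[3])‖ = (3:ℝ)⁻¹ := by simpa using PadicInt.norm_p (p := 3)
    rw [h3]
    calc ‖((c i : ℤ) : ℤ_[3])‖ * (3:ℝ)⁻¹ ^ i ≤ 1 * (3:ℝ)⁻¹ ^ i := by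
          apply mul_le_mul_of_nonneg_right (c i : ℤ_[3]).norm_le_one (by positivity)
      _ = (3:ℝ)⁻¹ ^ i := one_mul _
  -- partial sums in ℤ
  set Sa : ℕ → ℤ := fun t => ∑ i ∈ Finset.range t, a i * 3 ^ i with hSa
  set Sb : ℕ → ℤ := fun t => ∑ i ∈ Finset.range t, (b i : ℤ) * 3 ^ i with hSb
  -- key divisibility
  have key : ∀ t, ((3:ℤ)^t) ∣ (Sb t - Sa t) := by
    intro t
    have hfa := hsumg a
    have hfb := hsumg (fun i => (b i : ℤ))
    have h1 := Summable.sum_add_tsum_nat_add t hfa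
    have h2 := Summable.sum_add_tsum_nat_add t hfb
    have e1 : (∑' i : ℕ, (a (i + t) : ℤ_[3]) * 3 ^ (i + t))
        = 3 ^ t * ∑' i : ℕ, (a (i + t) : ℤ_[3]) * 3 ^ i := by
      rw [← (hsumg (fun i => a (i + t))).tsum_mul_left (3 ^ t)]
      exact tsum_congr fun i => by ring
    have e2 : (∑' i : ℕ, ((b (i + t) : ℤ) : ℤ_[3]) * 3 ^ (i + t))
        = 3 ^ t * ∑' i : ℕ, ((b (i + t) : ℤ) : ℤ_[3]) * 3 ^ i := by
      rw [← (hsumg (fun i => (b (i + t) : ℤ))).tsum_mul_left (3 ^ t)]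
      exact tsum_congr fun i => by ring
    have heq' : (∑' i : ℕ, (a i : ℤ_[3]) * 3 ^ i) = ∑' i : ℕ, ((b i : ℤ) : ℤ_[3]) * 3 ^ i := by
      exact heq.trans (tsum_congr fun i => by push_cast; ring)
    have hdvd : (3 ^ t : ℤ_[3]) ∣ ((Sb t - Sa t : ℤ) : ℤ_[3]) := by
      refine ⟨(∑' i : ℕ, (a (i + t) : ℤ_[3]) * 3 ^ i)
        - ∑' i : ℕ, ((b (i + t) : ℤ) : ℤ_[3]) * 3 ^ i, ?_⟩
      have hcast : ((Sb t - Sa t : ℤ) : ℤ_[3])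
          = (∑ i ∈ Finset.range t, ((b i : ℤ) : ℤ_[3]) * 3 ^ i)
            - ∑ i ∈ Finset.range t, (a i : ℤ_[3]) * 3 ^ i := by
        push_cast [hSa, hSb]; ring
      rw [hcast]
      have h4 := h1.trans (heq'.trans h2.symm)
      rw [e1, e2] at h4
      linear_combination -h4
    have hnorm : ‖((Sb t - Sa t : ℤ) : ℤ_[3])‖ ≤ ((3:ℕ):ℝ) ^ (-(t:ℤ)) := by
      obtain ⟨u, hu⟩ := hdvd
      rw [hu, norm_mul, norm_pow]
      have h3 : ‖(3 : ℤ_[3])‖ = (3:ℝ)⁻¹ := by simpa using PadicInt.norm_p (p := 3)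
      rw [h3]
      calc (3:ℝ)⁻¹ ^ t * ‖u‖ ≤ (3:ℝ)⁻¹ ^ t * 1 :=
            mul_le_mul_of_nonneg_left u.norm_le_one (by positivity)
        _ = ((3:ℕ):ℝ) ^ (-(t:ℤ)) := by
            rw [mul_one, zpow_neg, zpow_natCast, ← inv_pow]; norm_num
    have hd2 := PadicInt.norm_int_le_pow_iff_dvd.mp hnorm
    exact_mod_cast hd2
  -- bounds
  have hSa_bound : ∀ t, 2 * |Sa t| + 1 ≤ 3 ^ t := by
    intro t
    induction t with
    | zero => simp [hSa]
    | succ n ih =>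
      have h1 : Sa (n+1) = Sa n + a n * 3 ^ n := Finset.sum_range_succ _ _
      have h2 : |Sa n + a n * 3 ^ n| ≤ |Sa n| + |a n| * 3 ^ n := by
        calc |Sa n + a n * 3 ^ n| ≤ |Sa n| + |a n * 3 ^ n| := abs_add_le _ _
          _ = |Sa n| + |a n| * 3 ^ n := by
              rw [abs_mul, abs_pow]; norm_num
      have h3 : |a n| ≤ 1 := ha n
      have h4 : (0:ℤ) < 3 ^ n := pow_pos (by norm_num) n
      have h5 : (3:ℤ) ^ (n+1) = 3 * 3 ^ n := by ring
      rw [h1]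
      nlinarith
  have hSb_lb : ∀ t, 0 ≤ Sb t := by
    intro t
    apply Finset.sum_nonneg
    intro i _; positivity
  have hSb_ub : ∀ t, Sb t ≤ 3 ^ t - 1 := by
    intro t
    induction t with
    | zero => simp [hSb]
    | succ n ih =>
      have h1 : Sb (n+1) = Sb n + (b n : ℤ) * 3 ^ n := Finset.sum_range_succ _ _
      have h2 : (b n : ℤ) ≤ 2 := by exact_mod_cast Nat.lt_succ_iff.mp (hb n)
      have h3 : (3:ℤ) ^ (n+1) = 3 * 3 ^ n := by ring
      nlinarith [pow_pos (by norm_num : (0:ℤ) < 3) n]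
  -- carry values
  have hc : ∀ t, Sb t - Sa t = 0 ∨ Sb t - Sa t = 3 ^ t := by
    intro t
    obtain ⟨k, hk⟩ := key t
    have hp : (0:ℤ) < 3 ^ t := pow_pos (by norm_num) t
    have hlb : -(3^t) < Sb t - Sa t := by
      have := hSa_bound t
      have := hSb_lb t
      have := le_abs_self (Sa t)
      have := abs_nonneg (Sa t)
      linarith
    have hub : Sb t - Sa t < 2 * 3 ^ t := by
      have := hSa_bound t
      have := hSb_ub t
      have := neg_abs_le (Sa t)
      have := abs_nonneg (Sa t)
      linarith
    rw [hk] at hlb hub ⊢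
    have hk0 : -1 < k := by nlinarith
    have hk2 : k < 2 := by nlinarith
    interval_cases k
    · left; ring
    · right; ring
  set c : ℕ → ℤ := fun t => (Sb t - Sa t) / 3 ^ t with hcdef
  have hceq : ∀ t, Sb t - Sa t = 3 ^ t * c t := by
    intro t
    simp only [hcdef]
    rw [Int.mul_ediv_cancel' (key t)]
  have hc01 : ∀ t, c t = 0 ∨ c t = 1 := by
    intro t
    have hp : (0:ℤ) < 3 ^ t := pow_pos (by norm_num) t
    have h2 := hceq t
    rcases hc t with h | h
    · left
      rw [h] at h2
      rcases mul_eq_zero.mp h2.symm with h3 | h3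
      · exact absurd h3 hp.ne'
      · exact h3
    · right
      rw [h] at h2
      have : (3:ℤ) ^ t * 1 = 3 ^ t * c t := by linarith
      exact (mul_left_cancel₀ hp.ne' this).symm
  -- recurrence: a t = b t + c t - 3 * c (t+1)
  have hrec : ∀ t, a t = (b t : ℤ) + c t - 3 * c (t+1) := by
    intro t
    have h1 := hceq t
    have h2 := hceq (t+1)
    have ea : Sa (t+1) = Sa t + a t * 3 ^ t := Finset.sum_range_succ _ _
    have eb : Sb (t+1) = Sb t + (b t : ℤ) * 3 ^ t := Finset.sum_range_succ _ _
    have hp : (0:ℤ) < 3 ^ t := pow_pos (by norm_num) t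
    have hmul : 3 ^ t * (a t - ((b t : ℤ) + c t - 3 * c (t+1))) = 0 := by
      have h3 : (3:ℤ)^(t+1) = 3 * 3^t := by ring
      rw [ea, eb, h3] at h2
      ring_nf
      ring_nf at h1 h2
      linarith
    rcases mul_eq_zero.mp hmul with h | h
    · exact absurd h hp.ne'
    · linarith
  -- inductive claim
  have main : ∀ t, ((c t : ZMod 3)) = ∑ l ∈ Finset.range t,
      (b l : ZMod 3) * (1 - (b l : ZMod 3)) *
        ∏ i ∈ Finset.Ioo l t, (b i : ZMod 3) * (2 - (b i : ZMod 3)) := by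
    intro t
    induction t with
    | zero => simp [hcdef, hSa, hSb]
    | succ n ih =>
      have hF : (∑ l ∈ Finset.range (n+1),
          (b l : ZMod 3) * (1 - (b l : ZMod 3)) *
            ∏ i ∈ Finset.Ioo l (n+1), (b i : ZMod 3) * (2 - (b i : ZMod 3)))
          = (b n : ZMod 3) * (1 - (b n : ZMod 3)) +
            ((b n : ZMod 3) * (2 - (b n : ZMod 3))) *
            ∑ l ∈ Finset.range n,
              (b l : ZMod 3) * (1 - (b l : ZMod 3)) *
                ∏ i ∈ Finset.Ioo l n, (b i : ZMod 3) * (2 - (b i : ZMod 3)) := by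
        rw [Finset.sum_range_succ, Finset.mul_sum]
        have he : Finset.Ioo n (n+1) = ∅ := by
          ext x; simp
        rw [he, Finset.prod_empty, mul_one, add_comm]
        congr 1
        apply Finset.sum_congr rfl
        intro l hl
        have hln : l < n := Finset.mem_range.mp hl
        have hins : Finset.Ioo l (n+1) = insert n (Finset.Ioo l n) := by
          ext x; simp; omega
        rw [hins, Finset.prod_insert (by simp)]
        ring
      rw [hF, ← ih]
      exact carry_step (b n) (c n) (c (n+1)) (a n) (hb n) (ha n) (hc01 n) (hc01 (n+1)) (hrec n)
  -- conclude
  intro t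
  rw [← main t]
  have hr := hrec t
  have hcast : (a t : ZMod 3) = ((b t : ℤ) : ZMod 3) + (c t : ZMod 3) - 3 * (c (t+1) : ZMod 3) := by
    rw [hr]; push_cast; ring
  rw [hcast]
  have h3 : (3 : ZMod 3) = 0 := by decide
  rw [h3]
  push_cast
  ring
end

section
/- For an odd prime p and a tuple (a_0,...,a_{t-1}) with each a_i ∈ {0,±1,...,±(p-1)/2}, the polynomial f_t(a_0,...,a_{t-1}) = Σ_{λ=0}^{t-1} (Σ_{c=1}^{(p-1)/2} [(a_λ + c)^{p-1} - 1]) · Π_{λ < i < t} (1 - a_i^{p-1}) satisfies: f_t ≡ -1 (mod p) if (a_0,...,a_{t-1}) has the form (*,...,*, -c, 0,...,0) with a negative entry -c (1 ≤ c ≤ (p-1)/2) followed only by zeros, and f_t ≡ 0 (mod p) otherwise (in particular when all a_i are zero or when the last nonzero entry is positive). -/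
/-- Values of the transformation polynomial `f_t`. -/
theorem f_t_values (p : ℕ) [Fact (Nat.Prime p)] (hodd : Odd p) (hp3 : 3 ≤ p)
    (t : ℕ) (a : ℕ → ℤ) (ha : ∀ i, |a i| ≤ ((p : ℤ) - 1) / 2) :
    ((∃ m, m < t ∧ a m < 0 ∧ ∀ i, m < i → i < t → a i = 0) →
      (∑ l ∈ Finset.range t,
        (∑ c ∈ Finset.Icc 1 ((p - 1) / 2), (((a l : ZMod p) + c) ^ (p - 1) - 1)) *
          ∏ i ∈ Finset.Ioo l t, (1 - (a i : ZMod p) ^ (p - 1))) = -1) ∧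
    ((¬ ∃ m, m < t ∧ a m < 0 ∧ ∀ i, m < i → i < t → a i = 0) →
      (∑ l ∈ Finset.range t,
        (∑ c ∈ Finset.Icc 1 ((p - 1) / 2), (((a l : ZMod p) + c) ^ (p - 1) - 1)) *
          ∏ i ∈ Finset.Ioo l t, (1 - (a i : ZMod p) ^ (p - 1))) = 0) := by
  classical
  have hp : Nat.Prime p := Fact.out
  have hp1 : 1 < p := hp.one_lt
  have hne : p - 1 ≠ 0 := by omega
  have hhalf : (((p - 1) / 2 : ℕ) : ℤ) = ((p : ℤ) - 1) / 2 := by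
    obtain ⟨k, hk⟩ := hodd; subst hk; push_cast; omega
  have habs : ∀ x : ℤ, |x| < (p : ℤ) → (((x : ZMod p)) = 0 ↔ x = 0) := by
    intro x hx
    rw [ZMod.intCast_zmod_eq_zero_iff_dvd]
    constructor
    · intro hdvd
      exact Int.eq_zero_of_abs_lt_dvd hdvd hx
    · rintro rfl; exact dvd_zero _
  have hbound : ∀ i, |a i| < (p : ℤ) := fun i => lt_of_le_of_lt (ha i) (by omega)
  -- value of the inner sum
  have hterm : ∀ x : ℤ, |x| ≤ ((p : ℤ) - 1) / 2 →
      (∑ c ∈ Finset.Icc 1 ((p - 1) / 2), (((x : ZMod p) + c) ^ (p - 1) - 1))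
        = if x < 0 then (-1 : ZMod p) else 0 := by
    intro x hx
    have hx' := abs_le.mp hx
    have hcz : ∀ c ∈ Finset.Icc 1 ((p - 1) / 2), ((x : ZMod p) + (c : ℕ) = 0 ↔ x + c = 0) := by
      intro c hc
      simp only [Finset.mem_Icc] at hc
      have hcle : (c : ℤ) ≤ ((p : ℤ) - 1) / 2 := by
        rw [← hhalf]; exact_mod_cast hc.2
      have hc1 : (1 : ℤ) ≤ (c : ℤ) := by exact_mod_cast hc.1
      have hcast : ((x : ZMod p) + (c : ℕ)) = ((x + c : ℤ) : ZMod p) := by push_cast; ring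
      rw [hcast, habs]
      rw [abs_lt]
      omega
    split_ifs with hxneg
    · set c0 := (-x).toNat with hc0def
      have hc0 : c0 ∈ Finset.Icc 1 ((p - 1) / 2) := by
        simp only [Finset.mem_Icc]
        omega
      rw [Finset.sum_eq_single c0]
      · have h0 : (x : ZMod p) + (c0 : ℕ) = 0 := by
          rw [hcz c0 hc0]; omega
        rw [h0, zero_pow hne, zero_sub]
      · intro c hc hcne
        have h0 : (x : ZMod p) + (c : ℕ) ≠ 0 := by
          intro h; rw [hcz c hc] at h; apply hcne; omega
        rw [ZMod.pow_card_sub_one_eq_one h0, sub_self]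
      · intro h; exact absurd hc0 h
    · apply Finset.sum_eq_zero
      intro c hc
      have hc1 : 1 ≤ c := (Finset.mem_Icc.mp hc).1
      have h0 : (x : ZMod p) + (c : ℕ) ≠ 0 := by
        intro h; rw [hcz c hc] at h; omega
      rw [ZMod.pow_card_sub_one_eq_one h0, sub_self]
  -- value of each product factor
  have hfac : ∀ i, (1 - (a i : ZMod p) ^ (p - 1)) = if a i = 0 then 1 else 0 := by
    intro i
    split_ifs with h
    · rw [h]; push_cast; rw [zero_pow hne, sub_zero]
    · have h0 : (a i : ZMod p) ≠ 0 := fun hz => h ((habs _ (hbound i)).mp hz)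
      rw [ZMod.pow_card_sub_one_eq_one h0, sub_self]
  have hprod : ∀ l, (∏ i ∈ Finset.Ioo l t, (1 - (a i : ZMod p) ^ (p - 1)))
      = if (∀ i, l < i → i < t → a i = 0) then 1 else 0 := by
    intro l
    split_ifs with h
    · apply Finset.prod_eq_one
      intro i hi
      rw [hfac i, if_pos (h i (Finset.mem_Ioo.mp hi).1 (Finset.mem_Ioo.mp hi).2)]
    · push_neg at h
      obtain ⟨i, hli, hit, hne'⟩ := h
      apply Finset.prod_eq_zero (Finset.mem_Ioo.mpr ⟨hli, hit⟩)
      rw [hfac i, if_neg hne']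
  -- value of each summand
  have hmain : ∀ l,
      (∑ c ∈ Finset.Icc 1 ((p - 1) / 2), (((a l : ZMod p) + c) ^ (p - 1) - 1)) *
          (∏ i ∈ Finset.Ioo l t, (1 - (a i : ZMod p) ^ (p - 1)))
      = if (a l < 0 ∧ ∀ i, l < i → i < t → a i = 0) then (-1 : ZMod p) else 0 := by
    intro l
    rw [hterm (a l) (ha l), hprod l]
    by_cases h1 : a l < 0 <;> by_cases h2 : ∀ i, l < i → i < t → a i = 0 <;>
      simp [h1, h2]
  constructor
  · rintro ⟨m, hmt, hma, hmz⟩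
    rw [Finset.sum_congr rfl (fun l _ => hmain l)]
    rw [Finset.sum_eq_single m]
    · rw [if_pos ⟨hma, hmz⟩]
    · intro l hl hlm
      rw [if_neg]
      rintro ⟨h1, h2⟩
      rcases lt_or_gt_of_ne hlm with h | h
      · exact absurd (h2 m h hmt) (by omega)
      · exact absurd (hmz l h (Finset.mem_range.mp hl)) (by omega)
    · intro h; exact absurd (Finset.mem_range.mpr hmt) h
  · intro hno
    apply Finset.sum_eq_zero
    intro l hl
    rw [hmain l, if_neg]
    rintro ⟨h1, h2⟩
    exact hno ⟨l, Finset.mem_range.mp hl, h1, h2⟩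
end

section
/- Let A = Σ_{i=0}^r a_i 2^i and B = Σ_{i=0}^r b_i 2^i with binary digits a_i, b_i ∈ {0,1}, and write AB = Σ_{i=0}^{2r+1} e_i 2^i. Then e_0 ≡ a_0 b_0 (mod 2), and for 1 ≤ t ≤ 2r+1: e_t ≡ Σ_{(l_1,...,l_t)} Π_{k=1}^{t} σ_{l_k}(a_0 b_k, a_1 b_{k-1}, ..., a_k b_0) (mod 2), where the sum is over all tuples (l_1,...,l_t) of nonnegative integers with Σ_{k=1}^t l_k 2^k = 2^t and 0 ≤ l_k ≤ k+1, and σ_l denotes the l-th elementary symmetric polynomial (with σ_0 = 1). -/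
open Finset Polynomial

section BMFAux
lemma esymm_eq_choose (x : ℕ → ℕ) (s : Finset ℕ) (hx : ∀ i ∈ s, x i ≤ 1) (l : ℕ) :
    ∑ S ∈ Finset.powersetCard l s, ∏ i ∈ S, x i = (∑ i ∈ s, x i).choose l := by
  classical
  set T := s.filter (fun i => x i = 1) with hT
  have hsub : T ⊆ s := filter_subset _ _
  have hsum : ∑ i ∈ s, x i = T.card := by
    rw [card_eq_sum_ones, sum_filter]
    refine Finset.sum_congr rfl fun i hi => ?_
    have := hx i hi
    split_ifs with h <;> omega
  have hterm : ∀ S ∈ Finset.powersetCard l s, ∏ i ∈ S, x i = if S ⊆ T then 1 else 0 := by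
    intro S hS
    rw [mem_powersetCard] at hS
    split_ifs with h
    · exact Finset.prod_eq_one fun i hi => (mem_filter.1 (h hi)).2
    · obtain ⟨i, hiS, hiT⟩ := not_subset.1 h
      refine Finset.prod_eq_zero hiS ?_
      have h1 := hx i (hS.1 hiS)
      have h2 : ¬ x i = 1 := fun hc => hiT (mem_filter.2 ⟨hS.1 hiS, hc⟩)
      omega
  rw [Finset.sum_congr rfl hterm, Finset.sum_boole]
  have hfil : (powersetCard l s).filter (fun S => S ⊆ T) = powersetCard l T := by
    ext S
    simp only [mem_filter, mem_powersetCard]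
    constructor
    · rintro ⟨⟨-, hc⟩, hst⟩; exact ⟨hst, hc⟩
    · rintro ⟨hst, hc⟩; exact ⟨⟨hst.trans hsub, hc⟩, hst⟩
  rw [hfil, Finset.card_powersetCard, hsum, Nat.cast_id]

lemma digit_eq_choose (N t : ℕ) (ht : 1 ≤ t) :
    ((N / 2 ^ t % 2 : ℕ) : ZMod 2) = (N.choose (2 ^ t) : ZMod 2) := by
  have h := Choose.choose_modEq_choose_mul_prod_range_choose (n := N) (k := 2 ^ t) (p := 2) (t + 1)
  have hd0 : 2 ^ t / 2 ^ (t+1) = 0 := Nat.div_eq_of_lt (Nat.pow_lt_pow_right one_lt_two (by omega))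
  have hsm : ∀ i ∈ Finset.range t, (N / 2 ^ i % 2).choose (2 ^ t / 2 ^ i % 2) = 1 := by
    intro i hi
    rw [Finset.mem_range] at hi
    have hdv : 2 ^ t / 2 ^ i = 2 ^ (t - i) := Nat.pow_div hi.le (by norm_num)
    have h2 : 2 ^ (t - i) % 2 = 0 := by
      have : 2 ^ (t - i) = 2 * 2 ^ (t - i - 1) := by
        rw [← pow_succ']
        congr 1
        omega
      omega
    rw [hdv, h2, Nat.choose_zero_right]
  have key : ((N / 2 ^ (t+1)).choose (2 ^ t / 2 ^ (t+1)) *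
        ∏ i ∈ Finset.range (t+1), (N / 2 ^ i % 2).choose (2 ^ t / 2 ^ i % 2)) = N / 2 ^ t % 2 := by
    rw [hd0, Nat.choose_zero_right, one_mul, Finset.prod_range_succ,
      Finset.prod_congr rfl hsm, Finset.prod_const_one, one_mul, Nat.div_self (by positivity),
      Nat.one_mod, Nat.choose_one_right]
  rw [← key]
  exact_mod_cast ((ZMod.intCast_eq_intCast_iff _ _ _).2 h).symm

lemma choose_eq_sum_antidiag (M : ℕ) (c : ℕ → ℕ) (n : ℕ) :
    (((∑ m ∈ Finset.range M, c m * 2 ^ m).choose n : ℕ) : ZMod 2) =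
      ∑ μ ∈ Finset.finsuppAntidiag (Finset.range M) n,
        ∏ m ∈ Finset.range M,
          (if 2 ^ m ∣ μ m then (((c m).choose (μ m / 2 ^ m) : ℕ) : ZMod 2) else 0) := by
  classical
  set N := ∑ m ∈ Finset.range M, c m * 2 ^ m with hN
  have key : ((1 + X : Polynomial (ZMod 2))) ^ N =
      ∏ m ∈ Finset.range M, (1 + X ^ 2 ^ m) ^ c m := by
    rw [hN, ← Finset.prod_pow_eq_pow_sum]
    refine Finset.prod_congr rfl fun m _ => ?_
    rw [mul_comm, pow_mul, add_pow_char_pow]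
    simp
  -- coefficient extraction at n via power series
  have lhs : ((N.choose n : ℕ) : ZMod 2) = PowerSeries.coeff (R := ZMod 2) n
      ((((1 + X : Polynomial (ZMod 2)) ^ N : Polynomial (ZMod 2)) : PowerSeries (ZMod 2))) := by
    rw [Polynomial.coeff_coe, coeff_one_add_X_pow]
  rw [lhs, key]
  have : (((∏ m ∈ Finset.range M, ((1:Polynomial (ZMod 2)) + X ^ 2 ^ m) ^ c m : Polynomial (ZMod 2))) :
      PowerSeries (ZMod 2)) = ∏ m ∈ Finset.range M,
        ((((1:Polynomial (ZMod 2)) + X ^ 2 ^ m) ^ c m : Polynomial (ZMod 2)) : PowerSeries (ZMod 2)) := by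
    have h := map_prod (Polynomial.coeToPowerSeries.ringHom (R := ZMod 2))
      (fun m => ((1:Polynomial (ZMod 2)) + X ^ 2 ^ m) ^ c m) (Finset.range M)
    simpa only [Polynomial.coeToPowerSeries.ringHom_apply] using h
  rw [this, PowerSeries.coeff_prod]
  refine Finset.sum_congr rfl fun μ _ => Finset.prod_congr rfl fun m _ => ?_
  rw [Polynomial.coeff_coe]
  have hexp : ((1:Polynomial (ZMod 2)) + X ^ 2 ^ m) ^ c m =
      Polynomial.expand (ZMod 2) (2 ^ m) ((1 + X) ^ c m) := by
    rw [map_pow, map_add, map_one, Polynomial.expand_X]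
  rw [hexp, Polynomial.coeff_expand (pow_pos (by norm_num : (0:ℕ) < 2) m)]
  split_ifs with h
  · rw [coeff_one_add_X_pow]
  · rfl

lemma conv_sum (r : ℕ) (a b : ℕ → ℕ) (har : ∀ j, r < j → a j = 0) (hbr : ∀ j, r < j → b j = 0) :
    (∑ i ∈ Finset.range (r+1), a i * 2^i) * (∑ j ∈ Finset.range (r+1), b j * 2^j)
      = ∑ m ∈ Finset.range (2*r+2), (∑ i ∈ Finset.range (m+1), a i * b (m-i)) * 2^m := by
  classical
  rw [Finset.sum_mul_sum]
  have hL : ∀ i j : ℕ, (a i * 2^i) * (b j * 2^j) = a i * b j * 2^(i+j) := by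
    intro i j; rw [pow_add]; ring
  simp_rw [hL]
  have hR : ∀ m : ℕ, (∑ i ∈ Finset.range (m+1), a i * b (m-i)) * 2^m
      = ∑ i ∈ Finset.range (m+1), a i * b (m-i) * 2^m := by
    intro m; rw [Finset.sum_mul]
  simp_rw [hR]
  rw [← Finset.sum_product', Finset.sum_sigma']
  refine Finset.sum_bij_ne_zero (fun p _ _ => ⟨p.1 + p.2, p.1⟩) ?_ ?_ ?_ ?_
  · rintro ⟨i, j⟩ h₁ h₂
    simp only [Finset.mem_product, Finset.mem_range] at h₁
    simp only [Finset.mem_sigma, Finset.mem_range]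
    omega
  · rintro ⟨i₁, j₁⟩ h₁₁ h₁₂ ⟨i₂, j₂⟩ h₂₁ h₂₂ h
    simp only [Sigma.mk.inj_iff, heq_eq_eq] at h
    have : i₁ = i₂ := h.2
    have : j₁ = j₂ := by omega
    simp_all
  · rintro ⟨m, i⟩ hmem hne
    simp only [Finset.mem_sigma, Finset.mem_range] at hmem
    have hai : a i ≠ 0 := fun h => hne (by simp [h])
    have hbi : b (m - i) ≠ 0 := fun h => hne (by simp [h])
    have hia : i ≤ r := by by_contra h; exact hai (har i (by omega))
    have hib : m - i ≤ r := by by_contra h; exact hbi (hbr _ (by omega))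
    have him : i + (m - i) = m := by omega
    refine ⟨(i, m - i), ?_, ?_, ?_⟩
    · simp only [Finset.mem_product, Finset.mem_range]; omega
    · simpa [him] using hne
    · simp [him]
  · rintro ⟨i, j⟩ h₁ h₂
    have hj : i + j - i = j := by omega
    simp [hj]

/-- convolution coefficient -/
def ccc (a b : ℕ → ℕ) (m : ℕ) : ℕ := ∑ i ∈ Finset.range (m+1), a i * b (m - i)

lemma ccc_le (a b : ℕ → ℕ) (ha : ∀ i, a i < 2) (hb : ∀ i, b i < 2) (m : ℕ) :
    ccc a b m ≤ m + 1 := by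
  calc ccc a b m ≤ ∑ _i ∈ Finset.range (m+1), 1 := by
        refine Finset.sum_le_sum fun i _ => ?_
        have := ha i; have := hb (m - i)
        calc a i * b (m-i) ≤ 1 * 1 := Nat.mul_le_mul (by omega) (by omega)
          _ = 1 := by norm_num
    _ = m + 1 := by simp

lemma prod_range_shift {β : Type*} [CommMonoid β] (f : ℕ → β) (M t : ℕ) (ht : t < M)
    (h0 : f 0 = 1) (hbig : ∀ m, t < m → f m = 1) :
    ∏ m ∈ Finset.range M, f m = ∏ k ∈ Finset.range t, f (k+1) := by
  have h1 : ∏ m ∈ Finset.range M, f m = ∏ m ∈ Finset.range (t+1), f m :=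
    (Finset.prod_subset (Finset.range_subset_range.2 ht) (fun x hx hnx => by
      simp only [Finset.mem_range] at hx hnx
      exact hbig x (by omega))).symm
  rw [h1, Finset.prod_range_succ', h0, mul_one]

lemma sum_range_shift (f : ℕ → ℕ) (M t : ℕ) (ht : t < M)
    (h0 : f 0 = 0) (hbig : ∀ m, t < m → f m = 0) :
    ∑ m ∈ Finset.range M, f m = ∑ k ∈ Finset.range t, f (k+1) := by
  have h1 : ∑ m ∈ Finset.range M, f m = ∑ m ∈ Finset.range (t+1), f m :=
    (Finset.sum_subset (Finset.range_subset_range.2 ht) (fun x hx hnx => by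
      simp only [Finset.mem_range] at hx hnx
      exact hbig x (by omega))).symm
  rw [h1, Finset.sum_range_succ', h0, add_zero]

lemma F_eq (a b : ℕ → ℕ) (M t : ℕ) (htM : t < M) (μ : ℕ →₀ ℕ)
    (hd : ∀ m, 1 ≤ m → m ≤ t → 2 ^ m ∣ μ m) (h0 : μ 0 = 0) (hh : ∀ m, t < m → μ m = 0) :
    (∏ m ∈ Finset.range M,
        if 2 ^ m ∣ μ m then (((ccc a b m).choose (μ m / 2 ^ m) : ℕ) : ZMod 2) else 0)
      = ∏ k ∈ Finset.range t, (((ccc a b (k+1)).choose (μ (k+1) / 2 ^ (k+1)) : ℕ) : ZMod 2) := by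
  rw [prod_range_shift _ M t htM (by simp [h0]) (fun m hm => by simp [hh m hm])]
  refine Finset.prod_congr rfl fun k hk => ?_
  rw [Finset.mem_range] at hk
  rw [if_pos (hd (k+1) (by omega) (by omega))]

lemma facts_of_ne_zero (a b : ℕ → ℕ) (ha : ∀ i, a i < 2) (hb : ∀ i, b i < 2)
    (M t : ℕ) (ht1 : 1 ≤ t) (htM : t < M) (μ : ℕ →₀ ℕ)
    (hμ : μ ∈ Finset.finsuppAntidiag (Finset.range M) (2 ^ t))
    (hne : (∏ m ∈ Finset.range M,
        if 2 ^ m ∣ μ m then (((ccc a b m).choose (μ m / 2 ^ m) : ℕ) : ZMod 2) else 0) ≠ 0) :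
    (∀ m, m < M → 2 ^ m ∣ μ m) ∧ (∀ m, m < M → μ m / 2 ^ m ≤ ccc a b m) ∧
      μ 0 = 0 ∧ (∀ m, t < m → μ m = 0) := by
  rw [Finset.mem_finsuppAntidiag] at hμ
  obtain ⟨hsum, hsupp⟩ := hμ
  have hout : ∀ m, M ≤ m → μ m = 0 := by
    intro m hm
    by_contra h
    have := hsupp (Finsupp.mem_support_iff.2 h)
    rw [Finset.mem_range] at this
    omega
  rw [Finset.prod_ne_zero_iff] at hne
  have hd : ∀ m, m < M → 2 ^ m ∣ μ m := by
    intro m hm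
    have := hne m (Finset.mem_range.2 hm)
    by_contra h
    rw [if_neg h] at this
    exact this rfl
  have hle : ∀ m, m < M → μ m / 2 ^ m ≤ ccc a b m := by
    intro m hm
    have h := hne m (Finset.mem_range.2 hm)
    rw [if_pos (hd m hm)] at h
    by_contra hlt
    rw [Nat.choose_eq_zero_of_lt (by omega)] at h
    simp at h
  have h0 : μ 0 = 0 := by
    have hM : M = (M - 1) + 1 := by omega
    have hs2 : ∑ m ∈ Finset.range M, μ m = ∑ i ∈ Finset.range (M-1), μ (i+1) + μ 0 := by
      rw [hM] at hsum ⊢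
      exact Finset.sum_range_succ' _ _
    have hdvd2 : 2 ∣ ∑ i ∈ Finset.range (M-1), μ (i+1) := by
      refine Finset.dvd_sum fun i hi => ?_
      rw [Finset.mem_range] at hi
      exact dvd_trans (dvd_pow_self 2 (Nat.succ_ne_zero i)) (hd (i+1) (by omega))
    have hμ0 : μ 0 ≤ ccc a b 0 := by
      have := hle 0 (by omega)
      simpa using this
    have hcc0 : ccc a b 0 ≤ 1 := by simpa using ccc_le a b ha hb 0
    have h2t : 2 ∣ 2 ^ t := dvd_pow_self 2 (by omega)
    have hsum' : ∑ i ∈ Finset.range (M-1), μ (i+1) + μ 0 = 2 ^ t := by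
      rw [← hs2]; exact hsum
    omega
  refine ⟨hd, hle, h0, fun m hm => ?_⟩
  rcases lt_or_ge m M with h | h
  · have hd' := hd m h
    have hlesum : μ m ≤ 2 ^ t := hsum ▸ Finset.single_le_sum (f := fun m => μ m)
      (fun _ _ => Nat.zero_le _) (Finset.mem_range.2 h)
    by_contra hne0
    have h1 : 2 ^ m ≤ μ m := Nat.le_of_dvd (Nat.pos_of_ne_zero hne0) hd'
    have h2 : 2 ^ m ≤ 2 ^ t := le_trans h1 hlesum
    have := (Nat.pow_le_pow_iff_right one_lt_two).1 h2
    omega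
  · exact hout m h

lemma sigma_term_eq (a b : ℕ → ℕ) (ha : ∀ i, a i < 2) (hb : ∀ i, b i < 2) (k l : ℕ) :
    (∑ S ∈ Finset.powersetCard l (Finset.range (k+2)),
        ∏ i ∈ S, ((a i : ZMod 2) * (b (k+1-i) : ZMod 2)))
      = (((ccc a b (k+1)).choose l : ℕ) : ZMod 2) := by
  have hx : ∀ i ∈ Finset.range (k+2), a i * b (k+1-i) ≤ 1 := by
    intro i _
    have := ha i; have := hb (k+1-i)
    calc a i * b (k+1-i) ≤ 1 * 1 := Nat.mul_le_mul (by omega) (by omega)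
      _ = 1 := by norm_num
  have h := esymm_eq_choose (fun i => a i * b (k+1-i)) (Finset.range (k+2)) hx l
  have hcast : (∑ S ∈ Finset.powersetCard l (Finset.range (k+2)),
        ∏ i ∈ S, ((a i : ZMod 2) * (b (k+1-i) : ZMod 2)))
      = ((∑ S ∈ Finset.powersetCard l (Finset.range (k+2)),
        ∏ i ∈ S, (a i * b (k+1-i)) : ℕ) : ZMod 2) := by
    push_cast
    rfl
  rw [hcast, h]
  rfl


end BMFAux

/-- Multiplication formula for binary digits in terms of elementary symmetric polynomials. -/
theorem binary_multiplication_formula (r : ℕ) (a b : ℕ → ℕ)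
    (ha : ∀ i, a i < 2) (hb : ∀ i, b i < 2)
    (har : ∀ j, r < j → a j = 0) (hbr : ∀ j, r < j → b j = 0)
    (A B : ℕ)
    (hA : A = ∑ i ∈ Finset.range (r + 1), a i * 2 ^ i)
    (hB : B = ∑ i ∈ Finset.range (r + 1), b i * 2 ^ i)
    (e : ℕ → ℕ) (he : ∀ t, e t = A * B / 2 ^ t % 2) :
    (e 0 : ZMod 2) = a 0 * b 0 ∧
    ∀ t, 1 ≤ t → t ≤ 2 * r + 1 →
      (e t : ZMod 2) =
        ∑ l ∈ Finset.univ.filter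
            (fun l : Fin t → Fin (t + 2) =>
              (∑ k : Fin t, (l k : ℕ) * 2 ^ ((k : ℕ) + 1)) = 2 ^ t ∧
              ∀ k : Fin t, (l k : ℕ) ≤ (k : ℕ) + 2),
          ∏ k : Fin t,
            ∑ S ∈ Finset.powersetCard (l k : ℕ) (Finset.range ((k : ℕ) + 2)),
              ∏ i ∈ S, ((a i : ZMod 2) * (b ((k : ℕ) + 1 - i) : ZMod 2)) := by
  classical
  constructor
  · rw [he 0, pow_zero, Nat.div_one, ZMod.natCast_mod, Nat.cast_mul, hA, hB]
    push_cast
    rw [Finset.sum_eq_single_of_mem 0 (Finset.mem_range.2 (by omega)) ?_,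
        Finset.sum_eq_single_of_mem 0 (Finset.mem_range.2 (by omega)) ?_]
    · norm_num
    · intro i _ hi0
      have h20 : (2 : ZMod 2) = 0 := by decide
      rw [h20, zero_pow hi0, mul_zero]
    · intro i _ hi0
      have h20 : (2 : ZMod 2) = 0 := by decide
      rw [h20, zero_pow hi0, mul_zero]
  · intro t ht1 ht2
    set M := 2 * r + 2 with hMdef
    have htM : t < M := by omega
    rw [he t, digit_eq_choose _ t ht1, hA, hB, conv_sum r a b har hbr]
    have hccc : (∑ m ∈ Finset.range (2*r+2), (∑ i ∈ Finset.range (m+1), a i * b (m-i)) * 2^m)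
        = ∑ m ∈ Finset.range M, ccc a b m * 2 ^ m := rfl
    rw [hccc, choose_eq_sum_antidiag M (ccc a b) (2 ^ t)]
    have hg : ∀ l : Fin t → Fin (t + 2),
        (∏ k : Fin t, ∑ S ∈ Finset.powersetCard (l k : ℕ) (Finset.range ((k : ℕ) + 2)),
            ∏ i ∈ S, ((a i : ZMod 2) * (b ((k : ℕ) + 1 - i) : ZMod 2)))
          = ∏ k : Fin t, (((ccc a b ((k : ℕ) + 1)).choose (l k : ℕ) : ℕ) : ZMod 2) :=
      fun l => Finset.prod_congr rfl fun k _ => sigma_term_eq a b ha hb (k : ℕ) (l k : ℕ)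
    refine Eq.trans ?_ (Finset.sum_congr rfl fun l _ => (hg l).symm)
    refine Finset.sum_bij_ne_zero
      (fun μ hμ hne => fun k : Fin t =>
        (⟨μ ((k : ℕ) + 1) / 2 ^ ((k : ℕ) + 1), ?_⟩ : Fin (t + 2))) ?_ ?_ ?_ ?_
    · -- bound for the Fin value
      obtain ⟨hd, hle, h0, hh⟩ := facts_of_ne_zero a b ha hb M t ht1 htM μ hμ hne
      have h1 := hle ((k : ℕ) + 1) (by have := k.isLt; omega)
      have h2 := ccc_le a b ha hb ((k : ℕ) + 1)
      omega
    · -- membership in the filter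
      intro μ hμ hne
      obtain ⟨hd, hle, h0, hh⟩ := facts_of_ne_zero a b ha hb M t ht1 htM μ hμ hne
      rw [Finset.mem_filter]
      refine ⟨Finset.mem_univ _, ?_, ?_⟩
      · have hstep : ∀ k : Fin t,
            (μ ((k : ℕ) + 1) / 2 ^ ((k : ℕ) + 1)) * 2 ^ ((k : ℕ) + 1) = μ ((k : ℕ) + 1) :=
          fun k => Nat.div_mul_cancel (hd ((k : ℕ) + 1) (by have := k.isLt; omega))
        rw [Finset.sum_congr rfl (fun k _ => hstep k),
          Fin.sum_univ_eq_sum_range (fun k => μ (k + 1)) t,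
          ← sum_range_shift (fun m => μ m) M t htM h0 hh]
        rw [Finset.mem_finsuppAntidiag] at hμ
        exact hμ.1
      · intro k
        have h1 := hle ((k : ℕ) + 1) (by have := k.isLt; omega)
        have h2 := ccc_le a b ha hb ((k : ℕ) + 1)
        show μ ((k : ℕ) + 1) / 2 ^ ((k : ℕ) + 1) ≤ (k : ℕ) + 2
        omega
    · -- injectivity
      intro μ1 h11 h12 μ2 h21 h22 heq
      obtain ⟨hd1, hle1, h01, hh1⟩ := facts_of_ne_zero a b ha hb M t ht1 htM μ1 h11 h12
      obtain ⟨hd2, hle2, h02, hh2⟩ := facts_of_ne_zero a b ha hb M t ht1 htM μ2 h21 h22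
      ext m
      by_cases hm0 : m = 0
      · rw [hm0, h01, h02]
      by_cases hmt : m ≤ t
      · have hk : m - 1 < t := by omega
        have hcf := congrFun heq ⟨m - 1, hk⟩
        have hv : μ1 (m - 1 + 1) / 2 ^ (m - 1 + 1) = μ2 (m - 1 + 1) / 2 ^ (m - 1 + 1) :=
          congrArg Fin.val hcf
        have hm1 : m - 1 + 1 = m := by omega
        rw [hm1] at hv
        have d1 := hd1 m (by omega)
        have d2 := hd2 m (by omega)
        calc μ1 m = μ1 m / 2 ^ m * 2 ^ m := (Nat.div_mul_cancel d1).symm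
          _ = μ2 m / 2 ^ m * 2 ^ m := by rw [hv]
          _ = μ2 m := Nat.div_mul_cancel d2
      · rw [hh1 m (by omega), hh2 m (by omega)]
    · -- surjectivity
      intro l hl hlne
      rw [Finset.mem_filter] at hl
      obtain ⟨-, hsuml, hbnd⟩ := hl
      set μ : ℕ →₀ ℕ := Finsupp.onFinset (Finset.range M)
        (fun m => if h : 1 ≤ m ∧ m ≤ t then (l ⟨m - 1, by omega⟩ : ℕ) * 2 ^ m else 0)
        (fun m hm => by
          rw [Finset.mem_range]
          by_contra hc
          exact hm (dif_neg (by omega))) with hμdef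
      have happ : ∀ m, μ m =
          if h : 1 ≤ m ∧ m ≤ t then (l ⟨m - 1, by omega⟩ : ℕ) * 2 ^ m else 0 :=
        fun m => rfl
      have happ1 : ∀ k, (hk : k < t) → μ (k + 1) = (l ⟨k, hk⟩ : ℕ) * 2 ^ (k + 1) := by
        intro k hk
        rw [happ (k + 1), dif_pos ⟨by omega, by omega⟩]
        exact congrArg (fun z => (l z : ℕ) * 2 ^ (k + 1)) (Fin.ext (by simp))
      have h0μ : μ 0 = 0 := by rw [happ 0, dif_neg (by omega)]
      have hhμ : ∀ m, t < m → μ m = 0 := fun m hm => by rw [happ m, dif_neg (by omega)]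
      have hdμ : ∀ m, 1 ≤ m → m ≤ t → 2 ^ m ∣ μ m := by
        intro m h1 h2
        have hk := happ1 (m - 1) (by omega)
        have hm1 : m - 1 + 1 = m := by omega
        rw [hm1] at hk
        rw [hk]
        exact Dvd.intro_left _ rfl
      have hdivμ : ∀ k, (hk : k < t) → μ (k + 1) / 2 ^ (k + 1) = (l ⟨k, hk⟩ : ℕ) := by
        intro k hk
        rw [happ1 k hk, Nat.mul_div_cancel _ (pow_pos two_pos _)]
      have hμmem : μ ∈ Finset.finsuppAntidiag (Finset.range M) (2 ^ t) := by
        rw [Finset.mem_finsuppAntidiag]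
        constructor
        · rw [sum_range_shift (fun m => μ m) M t htM h0μ hhμ,
            ← Fin.sum_univ_eq_sum_range (fun k => μ (k + 1)) t]
          rw [← hsuml]
          exact Finset.sum_congr rfl fun k _ => happ1 (k : ℕ) k.isLt
        · exact Finsupp.support_onFinset_subset
      have hfeq : (∏ m ∈ Finset.range M,
            if 2 ^ m ∣ μ m then (((ccc a b m).choose (μ m / 2 ^ m) : ℕ) : ZMod 2) else 0)
          = ∏ k : Fin t, (((ccc a b ((k : ℕ) + 1)).choose (l k : ℕ) : ℕ) : ZMod 2) := by
        rw [F_eq a b M t htM μ hdμ h0μ hhμ,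
          ← Fin.prod_univ_eq_prod_range
            (fun k => (((ccc a b (k + 1)).choose (μ (k + 1) / 2 ^ (k + 1)) : ℕ) : ZMod 2)) t]
        exact Finset.prod_congr rfl fun k _ => by rw [hdivμ (k : ℕ) k.isLt]
      refine ⟨μ, hμmem, ?_, ?_⟩
      · rw [hfeq]; exact hlne
      · funext k
        apply Fin.ext
        show μ ((k : ℕ) + 1) / 2 ^ ((k : ℕ) + 1) = (l k : ℕ)
        rw [hdivμ (k : ℕ) k.isLt]
    · -- terms agree
      intro μ hμ hne
      obtain ⟨hd, hle, h0, hh⟩ := facts_of_ne_zero a b ha hb M t ht1 htM μ hμ hne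
      rw [F_eq a b M t htM μ (fun m h1 h2 => hd m (by omega)) h0 hh,
        ← Fin.prod_univ_eq_prod_range
          (fun k => (((ccc a b (k + 1)).choose (μ (k + 1) / 2 ^ (k + 1)) : ℕ) : ZMod 2)) t]
end
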